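/- arXiv:1807.11224 — 2 statements merged into one kernel-verified Lean document; each statement's English description precedes it below -/
import Mathlib

section
/- Let k ≥ 3, H a connected k-uniform hypergraph with degrees d_i, and b_i > 0 with b'_i = b_i^{−(k−1)} Σ_{{i,i2,...,ik}∈E(H)} b_{i2}···b_{ik}. Set g(i,j) = (d_i + d_j + √((d_i−d_j)² + 4 b'_i b'_j))/2. Then min over edges e, pairs {i,j} ⊆ e of g(i,j) ≤ ρ(Q(H)) ≤ max over such pairs of g(i,j), with equality on either side iff d_i + b'_i is constant over all vertices. -/
open scoped BigOperators

namespace TensorSR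

variable {n p : ℕ}

/-- `(A x)_i` for a tensor whose rows are indexed by `Fin n` and whose
"tails" (the remaining `p` indices, so the tensor has order `p+1`) are
functions `Fin p → Fin n`.  The real entries are coerced to `ℂ`. -/
noncomputable def tApply (A : Fin n → (Fin p → Fin n) → ℝ) (x : Fin n → ℂ) (i : Fin n) : ℂ :=
  ∑ t : Fin p → Fin n, (A i t : ℂ) * ∏ j, x (t j)

/-- `lam` is an eigenvalue of the tensor `A`: `A x = lam x^{[p]}` for some `x ≠ 0`. -/
def IsEigenvalue (A : Fin n → (Fin p → Fin n) → ℝ) (lam : ℂ) : Prop :=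
  ∃ x : Fin n → ℂ, x ≠ 0 ∧ ∀ i, tApply A x i = lam * (x i) ^ p

/-- The spectral radius: the sup of moduli of eigenvalues. -/
noncomputable def specRad (A : Fin n → (Fin p → Fin n) → ℝ) : ℝ :=
  sSup {r : ℝ | ∃ lam : ℂ, IsEigenvalue A lam ∧ r = ‖lam‖}

/-- `A` is entrywise nonnegative. -/
def Nonneg (A : Fin n → (Fin p → Fin n) → ℝ) : Prop := ∀ i t, 0 ≤ A i t

/-- Weak irreducibility: there is no nonempty proper `I ⊆ [n]` such that
`a_{i t} = 0` whenever `i ∈ I` and some entry of `t` lies outside `I`. -/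
def WeaklyIrreducible (A : Fin n → (Fin p → Fin n) → ℝ) : Prop :=
  ¬ ∃ I : Set (Fin n), I.Nonempty ∧ I ≠ Set.univ ∧
      ∀ i ∈ I, ∀ t : Fin p → Fin n, (∃ j, t j ∉ I) → A i t = 0

/-- The `i`-th row sum of `A`. -/
def rowSum (A : Fin n → (Fin p → Fin n) → ℝ) (i : Fin n) : ℝ := ∑ t, A i t

/-- `j ∈ N(i)`: some nonzero entry in row `i` involves index `j`. -/
def Nbr (A : Fin n → (Fin p → Fin n) → ℝ) (i j : Fin n) : Prop :=
  ∃ t, A i t ≠ 0 ∧ ∃ q, t q = j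

end TensorSR

open TensorSR

namespace HypSR

variable {n k : ℕ}

/-- Connectivity of a hypergraph with edge set `E`: every two vertices are
joined by a walk. -/
def HConnected (E : Finset (Finset (Fin n))) : Prop :=
  ∀ u v : Fin n,
    Relation.ReflTransGen (fun a b : Fin n => ∃ e ∈ E, a ∈ e ∧ b ∈ e) u v

/-- Degree of a vertex. -/
def deg (E : Finset (Finset (Fin n))) (i : Fin n) : ℕ :=
  (E.filter (fun e => i ∈ e)).card

/-- The adjacency tensor of a `k`-uniform hypergraph: order `k`, dimension `n`,
entry `1/(k-1)!` at `(i₁,…,i_k)` when `{i₁,…,i_k}` is an edge, and `0` otherwise. -/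
noncomputable def adjT (E : Finset (Finset (Fin n))) (k : ℕ) :
    Fin n → (Fin (k-1) → Fin n) → ℝ :=
  fun i t =>
    if insert i (Finset.image t Finset.univ) ∈ E then ((k-1).factorial : ℝ)⁻¹ else 0

/-- The signless Laplacian tensor `Q = D + A`. -/
noncomputable def signlessT (E : Finset (Finset (Fin n))) (k : ℕ) :
    Fin n → (Fin (k-1) → Fin n) → ℝ :=
  fun i t => adjT E k i t + if (∀ q, t q = i) then (deg E i : ℝ) else 0

end HypSR

open HypSR


namespace Stmt15Aux

open Finset

variable {n k : ℕ}

lemma image_card_lemma (hk : 3 ≤ k) {E : Finset (Finset (Fin n))}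
    (hunif : ∀ e ∈ E, e.card = k)
    {i : Fin n} {e : Finset (Fin n)} (he : e ∈ E) (hie : i ∈ e)
    (t : Fin (k-1) → Fin n) :
    (insert i (Finset.image t Finset.univ) = e) ↔
      Finset.image t Finset.univ = e.erase i := by
  constructor
  · intro h
    have hni : i ∉ Finset.image t Finset.univ := by
      intro hmem
      have h1 : insert i (Finset.image t Finset.univ) = Finset.image t Finset.univ :=
        Finset.insert_eq_self.2 hmem
      have h2 : e.card ≤ k - 1 := by
        rw [← h, h1]
        refine le_trans Finset.card_image_le ?_
        simp
      have h3 : e.card = k := hunif e he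
      omega
    rw [← h, Finset.erase_insert hni]
  · intro h
    rw [h, Finset.insert_erase hie]

lemma card_fiber (s : Finset (Fin n)) {m : ℕ} (hs : s.card = m) :
    (Finset.univ.filter
      (fun t : Fin m → Fin n => Finset.image t Finset.univ = s)).card = m.factorial := by
  classical
  set iso := s.orderIsoOfFin hs with hiso
  have key : (Finset.univ.filter
      (fun t : Fin m → Fin n => Finset.image t Finset.univ = s)).card
      = (Finset.univ : Finset (Equiv.Perm (Fin m))).card := ?_
  · rw [key, Finset.card_univ, Fintype.card_perm, Fintype.card_fin]
  have hinj : ∀ (t : Fin m → Fin n),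
      Finset.image t Finset.univ = s → Function.Injective t := by
    intro t ht
    have hc : (Finset.image t Finset.univ).card = (Finset.univ : Finset (Fin m)).card := by
      rw [ht, hs, Finset.card_univ, Fintype.card_fin]
    have := Finset.card_image_iff.mp hc
    intro a b hab
    exact this (by simp) (by simp) hab
  refine Finset.card_bij'
    (i := fun t ht => Equiv.ofBijective
      (fun j => iso.symm ⟨t j, by
        have ht' : Finset.image t Finset.univ = s := (Finset.mem_filter.mp ht).2
        rw [← ht']; exact Finset.mem_image_of_mem _ (Finset.mem_univ j)⟩)
      ?_)
    (j := fun π _ => fun j => (iso (π j) : Fin n)) ?_ ?_ ?_ ?_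
  · have ht' : Finset.image t Finset.univ = s := (Finset.mem_filter.mp ht).2
    have hti := hinj t ht'
    refine Finite.injective_iff_bijective.mp ?_
    intro a b hab
    apply hti
    have := congrArg (fun z => (iso z : Fin n)) hab
    simpa using this
  · intro t ht
    exact Finset.mem_univ _
  · intro π _
    refine Finset.mem_filter.mpr ⟨Finset.mem_univ _, ?_⟩
    apply Finset.eq_of_subset_of_card_le
    · intro v hv
      simp only [Finset.mem_image] at hv
      obtain ⟨j, _, rfl⟩ := hv
      exact (iso (π j)).2
    · rw [hs]
      rw [Finset.card_image_of_injective _ ?_]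
      · simp
      · intro a b hab
        apply π.injective
        apply iso.injective
        exact Subtype.ext hab
  · intro t ht
    funext j
    simp
  · intro π _
    apply Equiv.ext
    intro j
    simp [Equiv.ofBijective_apply]

lemma sum_prod_fiber (x : Fin n → ℂ) (s : Finset (Fin n)) {m : ℕ} (hs : s.card = m) :
    ∑ t ∈ Finset.univ.filter
        (fun t : Fin m → Fin n => Finset.image t Finset.univ = s), ∏ j, x (t j)
      = (m.factorial : ℂ) * ∏ v ∈ s, x v := by
  classical
  have hconst : ∀ t ∈ Finset.univ.filter
      (fun t : Fin m → Fin n => Finset.image t Finset.univ = s),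
      ∏ j, x (t j) = ∏ v ∈ s, x v := by
    intro t ht
    have ht' : Finset.image t Finset.univ = s := (Finset.mem_filter.mp ht).2
    have hc : (Finset.image t Finset.univ).card = (Finset.univ : Finset (Fin m)).card := by
      rw [ht', hs, Finset.card_univ, Fintype.card_fin]
    have hinj := Finset.card_image_iff.mp hc
    rw [← ht', Finset.prod_image (fun a ha b hb hab => hinj ha hb hab)]
  rw [Finset.sum_congr rfl hconst, Finset.sum_const, card_fiber s hs, nsmul_eq_mul]

lemma tApply_signless (hk : 3 ≤ k) (E : Finset (Finset (Fin n)))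
    (hunif : ∀ e ∈ E, e.card = k) (x : Fin n → ℂ) (i : Fin n) :
    tApply (signlessT E k) x i
      = (deg E i : ℂ) * x i ^ (k-1)
        + ∑ e ∈ E.filter (fun e => i ∈ e), ∏ v ∈ e.erase i, x v := by
  classical
  have hsplit : ∀ t : Fin (k-1) → Fin n,
      ((adjT E k i t + if (∀ q, t q = i) then (deg E i : ℝ) else 0 : ℝ) : ℂ) * ∏ j, x (t j)
      = (if insert i (Finset.image t Finset.univ) ∈ E
            then (((k-1).factorial : ℂ))⁻¹ else 0) * ∏ j, x (t j)
        + (if (∀ q, t q = i) then (deg E i : ℂ) else 0) * ∏ j, x (t j) := by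
    intro t
    rw [show ((adjT E k i t + if (∀ q, t q = i) then (deg E i : ℝ) else 0 : ℝ) : ℂ)
        = (adjT E k i t : ℂ) + (if (∀ q, t q = i) then (deg E i : ℂ) else 0) by
      push_cast [apply_ite (fun r : ℝ => (r : ℂ))]; ring_nf]
    rw [add_mul]
    congr 1
    unfold adjT
    rw [apply_ite (fun r : ℝ => (r : ℂ))]
    push_cast
    rfl
  have hsum : tApply (signlessT E k) x i
      = (∑ t : Fin (k-1) → Fin n,
          (if insert i (Finset.image t Finset.univ) ∈ E
            then (((k-1).factorial : ℂ))⁻¹ else 0) * ∏ j, x (t j))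
        + ∑ t : Fin (k-1) → Fin n,
          (if (∀ q, t q = i) then (deg E i : ℂ) else 0) * ∏ j, x (t j) := by
    rw [← Finset.sum_add_distrib]
    exact Finset.sum_congr rfl (fun t _ => hsplit t)
  rw [hsum]
  have hdiag : (∑ t : Fin (k-1) → Fin n,
      (if (∀ q, t q = i) then (deg E i : ℂ) else 0) * ∏ j, x (t j))
      = (deg E i : ℂ) * x i ^ (k-1) := by
    have h1 : ∀ t : Fin (k-1) → Fin n,
        (if (∀ q, t q = i) then (deg E i : ℂ) else 0) * ∏ j, x (t j)
        = if t = (fun _ => i) then (deg E i : ℂ) * ∏ j, x (t j) else 0 := by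
      intro t
      have hiff : (∀ q, t q = i) ↔ t = (fun _ => i) :=
        ⟨fun h => funext h, fun h q => congrFun h q⟩
      by_cases hc : t = (fun _ => i)
      · rw [if_pos (hiff.mpr hc), if_pos hc]
      · rw [if_neg (fun h => hc (hiff.mp h)), if_neg hc, zero_mul]
    rw [Finset.sum_congr rfl (fun t _ => h1 t),
      Finset.sum_ite_eq' Finset.univ (fun _ => i)
        (fun t => (deg E i : ℂ) * ∏ j, x (t j))]
    simp
  have hadj : (∑ t : Fin (k-1) → Fin n,
      (if insert i (Finset.image t Finset.univ) ∈ E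
        then (((k-1).factorial : ℂ))⁻¹ else 0) * ∏ j, x (t j))
      = ∑ e ∈ E.filter (fun e => i ∈ e), ∏ v ∈ e.erase i, x v := by
    have h1 : ∀ t : Fin (k-1) → Fin n,
        (if insert i (Finset.image t Finset.univ) ∈ E
          then (((k-1).factorial : ℂ))⁻¹ else 0) * ∏ j, x (t j)
        = if insert i (Finset.image t Finset.univ) ∈ E
            then (((k-1).factorial : ℂ))⁻¹ * ∏ j, x (t j) else 0 := by
      intro t; split <;> simp
    rw [Finset.sum_congr rfl (fun t _ => h1 t), ← Finset.sum_filter]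
    rw [← Finset.sum_fiberwise_of_maps_to
      (g := fun t : Fin (k-1) → Fin n => insert i (Finset.image t Finset.univ))
      (t := E.filter (fun e => i ∈ e))
      (fun t ht => Finset.mem_filter.mpr
        ⟨(Finset.mem_filter.mp ht).2, Finset.mem_insert_self _ _⟩)]
    refine Finset.sum_congr rfl (fun e he => ?_)
    obtain ⟨heE, hie⟩ := Finset.mem_filter.mp he
    have hset : (Finset.univ.filter
          (fun t : Fin (k-1) → Fin n => insert i (Finset.image t Finset.univ) ∈ E)).filter
          (fun t => insert i (Finset.image t Finset.univ) = e)
        = Finset.univ.filter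
          (fun t : Fin (k-1) → Fin n => Finset.image t Finset.univ = e.erase i) := by
      ext t
      simp only [Finset.mem_filter, Finset.mem_univ, true_and]
      constructor
      · rintro ⟨_, h2⟩
        exact (image_card_lemma hk hunif heE hie t).mp h2
      · intro h
        have h2 := (image_card_lemma hk hunif heE hie t).mpr h
        exact ⟨h2 ▸ heE, h2⟩
    rw [hset, ← Finset.mul_sum,
      sum_prod_fiber x (e.erase i)
        (by rw [Finset.card_erase_of_mem hie, hunif e heE]),
      ← mul_assoc, inv_mul_cancel₀ (by exact_mod_cast (k-1).factorial_ne_zero), one_mul]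
  rw [hdiag, hadj]
  ring

end Stmt15Aux

namespace Stmt15Aux

open Finset

variable {n k : ℕ}

/-- Real version of the row map of the signless Laplacian. -/
noncomputable def Qr (E : Finset (Finset (Fin n))) (k : ℕ) (y : Fin n → ℝ) (i : Fin n) : ℝ :=
  (deg E i : ℝ) * y i ^ (k-1) + ∑ e ∈ E.filter (fun e => i ∈ e), ∏ v ∈ e.erase i, y v

lemma tApply_real (hk : 3 ≤ k) (E : Finset (Finset (Fin n)))
    (hunif : ∀ e ∈ E, e.card = k) (y : Fin n → ℝ) (i : Fin n) :
    tApply (signlessT E k) (fun v => (y v : ℂ)) i = ((Qr E k y i : ℝ) : ℂ) := by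
  rw [tApply_signless hk E hunif]
  unfold Qr
  push_cast
  rfl

lemma Qr_nonneg (E : Finset (Finset (Fin n))) {y : Fin n → ℝ} (hy : ∀ v, 0 ≤ y v)
    (i : Fin n) : 0 ≤ Qr E k y i := by
  unfold Qr
  have h1 : (0:ℝ) ≤ (deg E i : ℝ) * y i ^ (k-1) :=
    mul_nonneg (Nat.cast_nonneg _) (pow_nonneg (hy i) _)
  have h2 : (0:ℝ) ≤ ∑ e ∈ E.filter (fun e => i ∈ e), ∏ v ∈ e.erase i, y v :=
    Finset.sum_nonneg (fun e _ => Finset.prod_nonneg (fun v _ => hy v))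
  linarith

lemma Qr_mono (E : Finset (Finset (Fin n))) {y z : Fin n → ℝ} (hy : ∀ v, 0 ≤ y v)
    (hyz : ∀ v, y v ≤ z v) (i : Fin n) : Qr E k y i ≤ Qr E k z i := by
  unfold Qr
  have h1 : (deg E i : ℝ) * y i ^ (k-1) ≤ (deg E i : ℝ) * z i ^ (k-1) :=
    mul_le_mul_of_nonneg_left (pow_le_pow_left₀ (hy i) (hyz i) _) (Nat.cast_nonneg _)
  have h2 : ∑ e ∈ E.filter (fun e => i ∈ e), ∏ v ∈ e.erase i, y v
      ≤ ∑ e ∈ E.filter (fun e => i ∈ e), ∏ v ∈ e.erase i, z v := by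
    refine Finset.sum_le_sum (fun e _ => Finset.prod_le_prod (fun v _ => hy v)
      (fun v _ => hyz v))
  linarith

lemma single_edge_le_Qr (E : Finset (Finset (Fin n))) {y : Fin n → ℝ} (hy : ∀ v, 0 ≤ y v)
    {e : Finset (Fin n)} {i : Fin n} (he : e ∈ E) (hie : i ∈ e) :
    ∏ v ∈ e.erase i, y v ≤ Qr E k y i := by
  unfold Qr
  have h1 : ∏ v ∈ e.erase i, y v
      ≤ ∑ e' ∈ E.filter (fun e' => i ∈ e'), ∏ v ∈ e'.erase i, y v := by
    refine Finset.single_le_sum (f := fun e' : Finset (Fin n) => ∏ v ∈ e'.erase i, y v)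
      (fun e' _ => Finset.prod_nonneg (fun v _ => hy v)) ?_
    exact Finset.mem_filter.mpr ⟨he, hie⟩
  have h2 : (0:ℝ) ≤ (deg E i : ℝ) * y i ^ (k-1) :=
    mul_nonneg (Nat.cast_nonneg _) (pow_nonneg (hy i) _)
  linarith

/-- Inside any edge, values of a vector satisfying row bounds are comparable. -/
lemma edge_ratio (hk : 3 ≤ k) {E : Finset (Finset (Fin n))}
    (hunif : ∀ e ∈ E, e.card = k) {y : Fin n → ℝ} {M : ℝ}
    (hy : ∀ v, 0 < y v) (hM1 : 1 ≤ M)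
    (hrow : ∀ i, Qr E k y i ≤ M * y i ^ (k-1))
    {e : Finset (Fin n)} (he : e ∈ E) {u w : Fin n} (hu : u ∈ e) (hw : w ∈ e) :
    y w ≤ M * y u := by
  obtain ⟨u₀, hu₀e, hu₀min⟩ := Finset.exists_min_image e y ⟨u, hu⟩
  have hstep : y w ≤ M * y u₀ := by
    by_cases hwu : w = u₀
    · subst hwu
      nlinarith [hy w]
    · have hwmem : w ∈ e.erase u₀ := Finset.mem_erase.mpr ⟨hwu, hw⟩
      have hcard : ((e.erase u₀).erase w).card = k - 2 := by
        rw [Finset.card_erase_of_mem hwmem, Finset.card_erase_of_mem hu₀e, hunif e he]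
        omega
      have hprodlow : y u₀ ^ (k-2) ≤ ∏ v ∈ (e.erase u₀).erase w, y v := by
        rw [← hcard, ← Finset.prod_const]
        refine Finset.prod_le_prod (fun v _ => le_of_lt (hy u₀)) (fun v hv => ?_)
        exact hu₀min v (Finset.mem_of_mem_erase (Finset.mem_of_mem_erase hv))
      have hfac : ∏ v ∈ e.erase u₀, y v = y w * ∏ v ∈ (e.erase u₀).erase w, y v :=
        (Finset.mul_prod_erase _ _ hwmem).symm
      have h1 : y w * y u₀ ^ (k-2) ≤ ∏ v ∈ e.erase u₀, y v := by
        rw [hfac]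
        have := hy w
        gcongr
      have h2 : ∏ v ∈ e.erase u₀, y v ≤ M * y u₀ ^ (k-1) :=
        le_trans (single_edge_le_Qr E (fun v => le_of_lt (hy v)) he hu₀e) (hrow u₀)
      have hk1 : k - 1 = (k-2) + 1 := by omega
      rw [hk1, pow_succ] at h2
      have hpowpos : (0:ℝ) < y u₀ ^ (k-2) := pow_pos (hy u₀) _
      nlinarith [h1, h2]
  have := hu₀min u hu
  nlinarith [hstep, hy u₀]

/-- Along a walk from inside `S` to outside `S`, some edge crosses `S`. -/
lemma crossing {E : Finset (Finset (Fin n))} {a z : Fin n}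
    (h : Relation.ReflTransGen (fun a b : Fin n => ∃ e ∈ E, a ∈ e ∧ b ∈ e) a z)
    (S : Finset (Fin n)) (hz : z ∉ S) :
    a ∈ S → ∃ e ∈ E, (∃ u ∈ e, u ∈ S) ∧ ∃ w ∈ e, w ∉ S := by
  induction h using Relation.ReflTransGen.head_induction_on with
  | refl => intro ha; exact absurd ha hz
  | @head a' c hrel hrtg ih =>
      intro ha'
      obtain ⟨e, he, hae, hce⟩ := hrel
      by_cases hc : c ∈ S
      · exact ih hc
      · exact ⟨e, he, ⟨a', hae, ha'⟩, ⟨c, hce, hc⟩⟩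

/-- Quantitative positivity: normalized vectors with bounded rows are bounded below. -/
lemma pos_lower (hk : 3 ≤ k) {E : Finset (Finset (Fin n))}
    (hunif : ∀ e ∈ E, e.card = k) (hconn : HConnected E)
    {y : Fin n → ℝ} {M : ℝ} (hy : ∀ v, 0 < y v) (hle1 : ∀ v, y v ≤ 1)
    (i₀ : Fin n) (hi₀ : y i₀ = 1) (hM1 : 1 ≤ M)
    (hrow : ∀ i, Qr E k y i ≤ M * y i ^ (k-1)) :
    ∀ v, (M⁻¹)^n ≤ y v := by
  have hMpos : (0:ℝ) < M := lt_of_lt_of_le one_pos hM1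
  have hMinv : M⁻¹ ≤ 1 := inv_le_one_of_one_le₀ hM1
  have hMinvpos : (0:ℝ) < M⁻¹ := inv_pos.mpr hMpos
  set S : ℕ → Finset (Fin n) := fun m => Finset.univ.filter (fun v => (M⁻¹)^m ≤ y v)
    with hS
  have hmono : ∀ m, S m ⊆ S (m+1) := by
    intro m v hv
    obtain ⟨_, h2⟩ := Finset.mem_filter.mp hv
    refine Finset.mem_filter.mpr ⟨Finset.mem_univ _, le_trans ?_ h2⟩
    exact pow_le_pow_of_le_one (le_of_lt hMinvpos) hMinv (by omega)
  have hi₀S : ∀ m, i₀ ∈ S m := by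
    intro m
    refine Finset.mem_filter.mpr ⟨Finset.mem_univ _, ?_⟩
    rw [hi₀]
    exact pow_le_one₀ (le_of_lt hMinvpos) hMinv
  have claim : ∀ m, S m = Finset.univ ∨ m + 1 ≤ (S m).card := by
    intro m
    induction m with
    | zero =>
        right
        exact Finset.card_pos.mpr ⟨i₀, hi₀S 0⟩
    | succ m ih =>
        by_cases huniv : S (m+1) = Finset.univ
        · exact Or.inl huniv
        · right
          rcases ih with h | h
          · refine absurd (Finset.eq_univ_of_forall (fun v => hmono m ?_)) huniv
            rw [h]; exact Finset.mem_univ v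
          · -- find a crossing edge
            have hne : ∃ z, z ∉ S m := by
              by_contra hcon
              push_neg at hcon
              exact huniv (Finset.eq_univ_of_forall (fun v => hmono m (hcon v)))
            obtain ⟨z, hz⟩ := hne
            obtain ⟨e, he, ⟨u, hue, huS⟩, ⟨w, hwe, hwS⟩⟩ :=
              crossing (hconn i₀ z) (S m) hz (hi₀S m)
            have hesub : ∀ v ∈ e, v ∈ S (m+1) := by
              intro v hv
              refine Finset.mem_filter.mpr ⟨Finset.mem_univ _, ?_⟩
              have hedge : y u ≤ M * y v := edge_ratio hk hunif hy hM1 hrow he hv hue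
              have huval : (M⁻¹)^m ≤ y u := (Finset.mem_filter.mp huS).2
              rw [pow_succ]
              have hMM : M * M⁻¹ = 1 := mul_inv_cancel₀ (ne_of_gt hMpos)
              nlinarith [hy v, hy u]
            have hsub : insert w (S m) ⊆ S (m+1) := by
              intro v hv
              rcases Finset.mem_insert.mp hv with h | h
              · exact h ▸ hesub w hwe
              · exact hmono m h
            calc m + 1 + 1 ≤ (S m).card + 1 := by omega
              _ = (insert w (S m)).card := (Finset.card_insert_of_notMem hwS).symm
              _ ≤ (S (m+1)).card := Finset.card_le_card hsub
  intro v
  rcases claim n with h | h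
  · have hv : v ∈ S n := by rw [h]; exact Finset.mem_univ v
    exact (Finset.mem_filter.mp hv).2
  · exfalso
    have hc := Finset.card_le_univ (S n)
    rw [Fintype.card_fin] at hc
    omega

end Stmt15Aux

namespace Stmt15Aux

open Finset

variable {n k : ℕ}

/-- The Collatz–Wielandt functional: max over rows of `(Qy)_i / y_i^{k-1}`. -/
noncomputable def lmax (E : Finset (Finset (Fin n))) (k : ℕ) (hn : 0 < n)
    (y : Fin n → ℝ) : ℝ :=
  Finset.univ.sup' ⟨⟨0, hn⟩, Finset.mem_univ _⟩ (fun i => Qr E k y i / y i ^ (k-1))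

lemma ratio_le_lmax (E : Finset (Finset (Fin n))) (hn : 0 < n) (y : Fin n → ℝ) (i : Fin n) :
    Qr E k y i / y i ^ (k-1) ≤ lmax E k hn y := by
  unfold lmax
  exact Finset.le_sup' (f := fun i => Qr E k y i / y i ^ (k-1)) (Finset.mem_univ i)

lemma row_le_lmax (E : Finset (Finset (Fin n))) (hn : 0 < n) {y : Fin n → ℝ}
    (hy : ∀ v, 0 < y v) (i : Fin n) :
    Qr E k y i ≤ lmax E k hn y * y i ^ (k-1) := by
  have h := ratio_le_lmax (k := k) E hn y i
  have hp : (0:ℝ) < y i ^ (k-1) := pow_pos (hy i) _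
  calc Qr E k y i = (Qr E k y i / y i ^ (k-1)) * y i ^ (k-1) := by field_simp
    _ ≤ lmax E k hn y * y i ^ (k-1) := by
        exact mul_le_mul_of_nonneg_right h (le_of_lt hp)

lemma lmax_le_of_rows (E : Finset (Finset (Fin n))) (hn : 0 < n) {y : Fin n → ℝ} {c : ℝ}
    (hy : ∀ v, 0 < y v) (h : ∀ i, Qr E k y i ≤ c * y i ^ (k-1)) :
    lmax E k hn y ≤ c := by
  refine Finset.sup'_le _ _ (fun i _ => ?_)
  rw [div_le_iff₀ (pow_pos (hy i) _)]
  exact h i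

lemma exists_lmax_eq (E : Finset (Finset (Fin n))) (hn : 0 < n) (y : Fin n → ℝ) :
    ∃ i, lmax E k hn y = Qr E k y i / y i ^ (k-1) := by
  obtain ⟨i, _, h⟩ := Finset.exists_mem_eq_sup'
    (⟨⟨0, hn⟩, Finset.mem_univ _⟩ : (Finset.univ : Finset (Fin n)).Nonempty)
    (fun i => Qr E k y i / y i ^ (k-1))
  exact ⟨i, h⟩

lemma deg_le_lmax (E : Finset (Finset (Fin n))) (hn : 0 < n) {y : Fin n → ℝ}
    (hy : ∀ v, 0 < y v) (i : Fin n) :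
    (deg E i : ℝ) ≤ lmax E k hn y := by
  refine le_trans ?_ (ratio_le_lmax (k := k) E hn y i)
  rw [le_div_iff₀ (pow_pos (hy i) _)]
  unfold Qr
  have : (0:ℝ) ≤ ∑ e ∈ E.filter (fun e => i ∈ e), ∏ v ∈ e.erase i, y v :=
    Finset.sum_nonneg (fun e _ => Finset.prod_nonneg
      (fun v _ => le_of_lt (hy v)))
  linarith

lemma Qr_smul (E : Finset (Finset (Fin n))) (hunif : ∀ e ∈ E, e.card = k)
    (s : ℝ) (y : Fin n → ℝ) (i : Fin n) :
    Qr E k (fun v => s * y v) i = s^(k-1) * Qr E k y i := by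
  unfold Qr
  rw [mul_add]
  congr 1
  · rw [mul_pow]; ring
  · rw [Finset.mul_sum]
    refine Finset.sum_congr rfl (fun e he => ?_)
    obtain ⟨heE, hie⟩ := Finset.mem_filter.mp he
    rw [Finset.prod_mul_distrib, Finset.prod_const, Finset.card_erase_of_mem hie,
      hunif e heE]

lemma lmax_smul (E : Finset (Finset (Fin n))) (hunif : ∀ e ∈ E, e.card = k) (hn : 0 < n)
    {s : ℝ} (hs : 0 < s) (y : Fin n → ℝ) :
    lmax E k hn (fun v => s * y v) = lmax E k hn y := by
  unfold lmax
  refine Finset.sup'_congr _ rfl (fun i _ => ?_)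
  rw [Qr_smul E hunif, mul_pow]
  exact mul_div_mul_left _ _ (pow_ne_zero _ (ne_of_gt hs))

lemma continuousOn_sup' {ι : Type*} {X : Type*} [TopologicalSpace X]
    {D : Set X} (s : Finset ι) (hs : s.Nonempty)
    (f : ι → X → ℝ) (hf : ∀ i ∈ s, ContinuousOn (f i) D) :
    ContinuousOn (fun y => s.sup' hs (fun i => f i y)) D := by
  induction hs using Finset.Nonempty.cons_induction with
  | singleton a => simpa using hf a (by simp)
  | cons a s h hs ih =>
      have h1 : ContinuousOn (fun y => f a y ⊔ s.sup' hs (fun i => f i y)) D := by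
        refine ContinuousOn.sup (hf a (by simp)) (ih (fun i hi => hf i ?_))
        exact Finset.mem_cons_of_mem hi
      refine h1.congr (fun y _ => ?_)
      rw [Finset.sup'_cons]

lemma continuous_Qr (E : Finset (Finset (Fin n))) (k : ℕ) (i : Fin n) :
    Continuous (fun y : Fin n → ℝ => Qr E k y i) := by
  unfold Qr
  refine Continuous.add ?_ ?_
  · exact continuous_const.mul ((continuous_apply i).pow _)
  · exact continuous_finset_sum _ (fun e _ =>
      continuous_finset_prod _ (fun v _ => continuous_apply v))

/-- Existence of a positive global minimizer of `lmax` over positive vectors. -/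
lemma exists_minimizer (hk : 3 ≤ k) {E : Finset (Finset (Fin n))}
    (hunif : ∀ e ∈ E, e.card = k) (hconn : HConnected E) (hn : 0 < n)
    (hdeg : ∀ i, 0 < deg E i) (b : Fin n → ℝ) (hb : ∀ i, 0 < b i) :
    ∃ y : Fin n → ℝ, (∀ v, 0 < y v) ∧
      (∀ z : Fin n → ℝ, (∀ v, 0 < z v) → lmax E k hn y ≤ lmax E k hn z) := by
  classical
  obtain ⟨i₁, _, hi₁max⟩ := Finset.exists_max_image Finset.univ b
    ⟨⟨0, hn⟩, Finset.mem_univ _⟩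
  set bh : Fin n → ℝ := fun v => (b i₁)⁻¹ * b v with hbh
  have hbhpos : ∀ v, 0 < bh v := fun v => mul_pos (inv_pos.mpr (hb i₁)) (hb v)
  have hbh1 : ∀ v, bh v ≤ 1 := by
    intro v
    rw [hbh]
    rw [inv_mul_le_iff₀ (hb i₁), mul_one]
    exact hi₁max v (Finset.mem_univ v)
  have hbhi₁ : bh i₁ = 1 := inv_mul_cancel₀ (ne_of_gt (hb i₁))
  set M₀ : ℝ := lmax E k hn bh with hM₀
  have hM₀1 : 1 ≤ M₀ := by
    have h1 := deg_le_lmax (k := k) E hn hbhpos ⟨0, hn⟩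
    have h2 : (1:ℝ) ≤ (deg E ⟨0, hn⟩ : ℝ) := by
      exact_mod_cast hdeg ⟨0, hn⟩
    linarith
  have hM₀pos : (0:ℝ) < M₀ := lt_of_lt_of_le one_pos hM₀1
  set c : ℝ := (M₀⁻¹)^n with hc
  have hcpos : 0 < c := pow_pos (inv_pos.mpr hM₀pos) _
  have hc1 : c ≤ 1 := pow_le_one₀ (le_of_lt (inv_pos.mpr hM₀pos))
    (inv_le_one_of_one_le₀ hM₀1)
  set B : Set (Fin n → ℝ) := Set.Icc (fun _ => c) (fun _ => 1) with hB
  have hmemB : ∀ z : Fin n → ℝ, (∀ v, c ≤ z v) → (∀ v, z v ≤ 1) → z ∈ B := by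
    intro z h1 h2
    exact Set.mem_Icc.mpr ⟨fun v => h1 v, fun v => h2 v⟩
  have hBpos : ∀ z ∈ B, ∀ v, 0 < z v := by
    intro z hz v
    have := (Set.mem_Icc.mp hz).1 v
    linarith
  have hbhB : bh ∈ B := by
    refine hmemB bh ?_ hbh1
    exact pos_lower hk hunif hconn hbhpos hbh1 i₁ hbhi₁ hM₀1
      (fun i => row_le_lmax E hn hbhpos i)
  have hcomp : IsCompact B := isCompact_Icc
  have hcont : ContinuousOn (fun y => lmax E k hn y) B := by
    unfold lmax
    refine continuousOn_sup' _ _ _ (fun i _ => ?_)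
    refine ContinuousOn.div ((continuous_Qr E k i).continuousOn) ?_ ?_
    · exact ((continuous_apply i).pow _).continuousOn
    · intro z hz
      exact ne_of_gt (pow_pos (hBpos z hz i) _)
  obtain ⟨y, hyB, hymin⟩ := hcomp.exists_isMinOn ⟨bh, hbhB⟩ hcont
  have hyminB : ∀ z ∈ B, lmax E k hn y ≤ lmax E k hn z := fun z hz =>
    (isMinOn_iff.mp hymin) z hz
  refine ⟨y, hBpos y hyB, ?_⟩
  intro z hz
  obtain ⟨i₂, _, hi₂max⟩ := Finset.exists_max_image Finset.univ z
    ⟨⟨0, hn⟩, Finset.mem_univ _⟩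
  set zh : Fin n → ℝ := fun v => (z i₂)⁻¹ * z v with hzh
  have hzhpos : ∀ v, 0 < zh v := fun v => mul_pos (inv_pos.mpr (hz i₂)) (hz v)
  have hzh1 : ∀ v, zh v ≤ 1 := by
    intro v
    rw [hzh, inv_mul_le_iff₀ (hz i₂), mul_one]
    exact hi₂max v (Finset.mem_univ v)
  have hzhi₂ : zh i₂ = 1 := inv_mul_cancel₀ (ne_of_gt (hz i₂))
  have hlz : lmax E k hn zh = lmax E k hn z :=
    lmax_smul E hunif hn (inv_pos.mpr (hz i₂)) z
  by_cases hcase : lmax E k hn zh ≤ M₀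
  · have hzhB : zh ∈ B := by
      refine hmemB zh ?_ hzh1
      refine pos_lower hk hunif hconn hzhpos hzh1 i₂ hzhi₂ hM₀1 (fun i => ?_)
      calc Qr E k zh i ≤ lmax E k hn zh * zh i ^ (k-1) := row_le_lmax E hn hzhpos i
        _ ≤ M₀ * zh i ^ (k-1) := by
            exact mul_le_mul_of_nonneg_right hcase (le_of_lt (pow_pos (hzhpos i) _))
    rw [← hlz]
    exact hyminB zh hzhB
  · push_neg at hcase
    rw [← hlz]
    have := hyminB bh hbhB
    rw [← hM₀] at this
    linarith

end Stmt15Aux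

namespace Stmt15Aux

open Finset

variable {n k : ℕ} {E : Finset (Finset (Fin n))}

lemma contr_univ (hn : 0 < n) {μ : ℝ} {z : Fin n → ℝ} (hz : ∀ v, 0 < z v)
    (hlz : lmax E k hn z = μ)
    (hall : ∀ j, Qr E k z j < μ * z j ^ (k-1)) : False := by
  have h : lmax E k hn z < μ := by
    unfold lmax
    refine (Finset.sup'_lt_iff _).2 ?_
    intro i _
    rw [div_lt_iff₀ (pow_pos (hz i) _)]
    exact hall i
  rw [hlz] at h
  exact lt_irrefl _ h

lemma step_lemma (hk : 3 ≤ k) (hunif : ∀ e ∈ E, e.card = k) (hconn : HConnected E)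
    (hn : 0 < n) {μ : ℝ} (hμ1 : 1 ≤ μ)
    {z : Fin n → ℝ} (hz : ∀ v, 0 < z v) (hlz : lmax E k hn z = μ)
    (hmin : ∀ w : Fin n → ℝ, (∀ v, 0 < w v) → μ ≤ lmax E k hn w)
    (J : Finset (Fin n)) (hJdef : ∀ j, j ∈ J ↔ Qr E k z j < μ * z j ^ (k-1))
    (hJne : J.Nonempty) (hJuniv : J ≠ Finset.univ) :
    ∃ z' : Fin n → ℝ, (∀ v, 0 < z' v) ∧ lmax E k hn z' = μ ∧
      ∃ i0, i0 ∉ J ∧ ∀ j ∈ insert i0 J, Qr E k z' j < μ * z' j ^ (k-1) := by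
  classical
  have hμpos : (0:ℝ) < μ := lt_of_lt_of_le one_pos hμ1
  have hk1 : (0:ℕ) < k - 1 := by omega
  set θ := J.sup' hJne (fun j => Qr E k z j / (μ * z j ^ (k-1))) with hθdef
  have hθlt : θ < 1 := by
    rw [hθdef, Finset.sup'_lt_iff]
    intro j hj
    have hzj := hz j
    rw [div_lt_one (by positivity)]
    exact (hJdef j).mp hj
  have hθge : ∀ j ∈ J, Qr E k z j ≤ θ * (μ * z j ^ (k-1)) := by
    intro j hj
    have hzj := hz j
    have h := Finset.le_sup' (f := fun j => Qr E k z j / (μ * z j ^ (k-1))) hj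
    rw [← hθdef, div_le_iff₀ (by positivity)] at h
    linarith [h]
  have hθ0 : 0 ≤ θ := by
    obtain ⟨j, hj⟩ := hJne
    refine le_trans ?_ (Finset.le_sup' (f := fun j => Qr E k z j / (μ * z j ^ (k-1))) hj)
    have hzj := hz j
    have h1 : 0 ≤ Qr E k z j := Qr_nonneg E (fun v => le_of_lt (hz v)) j
    positivity
  set ε := (1 - θ) / (2 * ((k:ℝ)-1)) with hεdef
  have hkR : (2:ℝ) ≤ (k:ℝ) - 1 := by
    have : (3:ℝ) ≤ (k:ℝ) := by exact_mod_cast hk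
    linarith
  have hεpos : 0 < ε := by
    rw [hεdef]
    apply div_pos (by linarith) (by linarith)
  have hεle : ε ≤ 1/4 := by
    rw [hεdef, div_le_iff₀ (by linarith)]
    nlinarith
  have h1ε : (0:ℝ) < 1 - ε := by linarith
  have hcast : ((k - 1 : ℕ) : ℝ) = (k:ℝ) - 1 := by
    have : (1:ℕ) ≤ k := by omega
    push_cast [Nat.cast_sub this]
    ring
  have hbern : θ < (1-ε)^(k-1) := by
    have h := one_add_mul_le_pow (a := -ε) (by linarith) (k-1)
    have h2 : (1 + ((k-1 : ℕ):ℝ) * (-ε)) = 1 - ((k:ℝ)-1) * ε := by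
      rw [hcast]; ring
    rw [h2] at h
    have h3 : ((k:ℝ)-1) * ε = (1-θ)/2 := by
      rw [hεdef]
      field_simp
    rw [h3] at h
    have h4 : (1 + -ε) = 1 - ε := by ring
    rw [h4] at h
    linarith
  set z' : Fin n → ℝ := fun v => if v ∈ J then (1-ε) * z v else z v with hz'def
  have hz'pos : ∀ v, 0 < z' v := by
    intro v
    rw [hz'def]
    dsimp only
    split
    · exact mul_pos h1ε (hz v)
    · exact hz v
  have hz'le : ∀ v, z' v ≤ z v := by
    intro v
    rw [hz'def]
    dsimp only
    split
    · nlinarith [hz v]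
    · exact le_refl _
  have hQle : ∀ v, Qr E k z' v ≤ Qr E k z v :=
    fun v => Qr_mono E (fun u => le_of_lt (hz'pos u)) hz'le v
  have hrowJ : ∀ j ∈ J, Qr E k z' j < μ * z' j ^ (k-1) := by
    intro j hj
    have h1 : Qr E k z' j ≤ θ * (μ * z j ^ (k-1)) := le_trans (hQle j) (hθge j hj)
    have h2 : μ * z' j ^ (k-1) = (1-ε)^(k-1) * (μ * z j ^ (k-1)) := by
      rw [hz'def]
      dsimp only
      rw [if_pos hj, mul_pow]
      ring
    rw [h2]
    have hzj := hz j
    have hpos : 0 < μ * z j ^ (k-1) := by positivity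
    nlinarith [hbern]
  have hrowle : ∀ v, Qr E k z' v ≤ μ * z' v ^ (k-1) := by
    intro v
    by_cases hv : v ∈ J
    · exact le_of_lt (hrowJ v hv)
    · have h1 : Qr E k z v ≤ μ * z v ^ (k-1) := by
        have h := row_le_lmax (k := k) E hn hz v
        rw [hlz] at h
        exact h
      have h2 : z' v = z v := by rw [hz'def]; dsimp only; rw [if_neg hv]
      rw [h2]
      exact le_trans (hQle v) h1
  obtain ⟨w, hw⟩ : ∃ w, w ∉ J := by
    by_contra hcon
    push_neg at hcon
    exact hJuniv (Finset.eq_univ_of_forall hcon)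
  obtain ⟨u₀, hu₀⟩ := hJne
  obtain ⟨e, he, ⟨u, hue, huJ⟩, ⟨i0, hie, hiJ⟩⟩ := crossing (hconn u₀ w) J hw hu₀
  have hdiag : z' i0 = z i0 := by rw [hz'def]; dsimp only; rw [if_neg hiJ]
  have hQstrict : Qr E k z' i0 < Qr E k z i0 := by
    unfold Qr
    rw [hdiag]
    refine add_lt_add_of_le_of_lt le_rfl ?_
    refine Finset.sum_lt_sum
      (fun e' _ => Finset.prod_le_prod (fun v _ => le_of_lt (hz'pos v))
        (fun v _ => hz'le v))
      ⟨e, Finset.mem_filter.mpr ⟨he, hie⟩, ?_⟩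
    refine Finset.prod_lt_prod (fun v _ => hz'pos v) (fun v _ => hz'le v)
      ⟨u, Finset.mem_erase.mpr ⟨fun h => hiJ (h ▸ huJ), hue⟩, ?_⟩
    rw [hz'def]
    dsimp only
    rw [if_pos huJ]
    nlinarith [hz u]
  have hrowi : Qr E k z' i0 < μ * z' i0 ^ (k-1) := by
    have h1 : Qr E k z i0 ≤ μ * z i0 ^ (k-1) := by
      have h := row_le_lmax (k := k) E hn hz i0
      rw [hlz] at h
      exact h
    rw [hdiag]
    exact lt_of_lt_of_le hQstrict h1
  refine ⟨z', hz'pos, le_antisymm (lmax_le_of_rows E hn hz'pos hrowle)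
    (hmin z' hz'pos), i0, hiJ, ?_⟩
  intro j hj
  rcases Finset.mem_insert.mp hj with h | h
  · subst h
    exact hrowi
  · exact hrowJ j h

lemma minimizer_eigen (hk : 3 ≤ k) (hunif : ∀ e ∈ E, e.card = k) (hconn : HConnected E)
    (hn : 0 < n) (hdeg : ∀ i, 0 < deg E i)
    {y : Fin n → ℝ} (hy : ∀ v, 0 < y v)
    (hmin : ∀ z : Fin n → ℝ, (∀ v, 0 < z v) → lmax E k hn y ≤ lmax E k hn z) :
    ∀ i, Qr E k y i = lmax E k hn y * y i ^ (k-1) := by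
  classical
  set μ := lmax E k hn y with hμdef
  have hμ1 : (1:ℝ) ≤ μ := by
    have h1 := deg_le_lmax (k := k) E hn hy ⟨0, hn⟩
    have h2 : (1:ℝ) ≤ (deg E ⟨0, hn⟩ : ℝ) := by exact_mod_cast hdeg ⟨0, hn⟩
    rw [hμdef]
    linarith
  by_contra hcon
  push_neg at hcon
  obtain ⟨i₀, hi₀⟩ := hcon
  have claim : ∀ m : ℕ, ∀ z : Fin n → ℝ, (∀ v, 0 < z v) → lmax E k hn z = μ →
      (Finset.univ.filter (fun j => Qr E k z j < μ * z j ^ (k-1))).Nonempty →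
      n ≤ (Finset.univ.filter (fun j => Qr E k z j < μ * z j ^ (k-1))).card + m →
      False := by
    intro m
    induction m with
    | zero =>
        intro z hz hlz hne hcard
        have hJuniv : Finset.univ.filter (fun j => Qr E k z j < μ * z j ^ (k-1))
            = Finset.univ := by
          apply Finset.eq_univ_of_card
          have h1 := Finset.card_le_univ
            (Finset.univ.filter (fun j => Qr E k z j < μ * z j ^ (k-1)))
          rw [Fintype.card_fin] at h1 ⊢
          omega
        refine contr_univ hn hz hlz (fun j => ?_)
        have : j ∈ Finset.univ.filter (fun j => Qr E k z j < μ * z j ^ (k-1)) := by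
          rw [hJuniv]; exact Finset.mem_univ j
        exact (Finset.mem_filter.mp this).2
    | succ m ih =>
        intro z hz hlz hne hcard
        by_cases hJuniv : Finset.univ.filter (fun j => Qr E k z j < μ * z j ^ (k-1))
            = Finset.univ
        · refine contr_univ hn hz hlz (fun j => ?_)
          have : j ∈ Finset.univ.filter (fun j => Qr E k z j < μ * z j ^ (k-1)) := by
            rw [hJuniv]; exact Finset.mem_univ j
          exact (Finset.mem_filter.mp this).2
        · obtain ⟨z', hz'pos, hlz', i0, hi0, hstrict⟩ :=
            step_lemma hk hunif hconn hn hμ1 hz hlz hmin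
              (Finset.univ.filter (fun j => Qr E k z j < μ * z j ^ (k-1)))
              (fun j => by simp) hne hJuniv
          have hsub : insert i0 (Finset.univ.filter
                (fun j => Qr E k z j < μ * z j ^ (k-1)))
              ⊆ Finset.univ.filter (fun j => Qr E k z' j < μ * z' j ^ (k-1)) := by
            intro j hj
            exact Finset.mem_filter.mpr ⟨Finset.mem_univ _, hstrict j hj⟩
          have hcard2 := Finset.card_le_card hsub
          rw [Finset.card_insert_of_notMem hi0] at hcard2
          refine ih z' hz'pos hlz' ⟨i0, ?_⟩ (by omega)
          exact Finset.mem_filter.mpr ⟨Finset.mem_univ _,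
            hstrict i0 (Finset.mem_insert_self _ _)⟩
  refine claim n y hy rfl ⟨i₀, ?_⟩ (by omega)
  refine Finset.mem_filter.mpr ⟨Finset.mem_univ _, ?_⟩
  have h := row_le_lmax (k := k) E hn hy i₀
  rw [← hμdef] at h
  exact lt_of_le_of_ne h hi₀

end Stmt15Aux

namespace Stmt15Aux

open Finset

variable {n k : ℕ} {E : Finset (Finset (Fin n))}

lemma hdeg_of_conn (hconn : HConnected E) (hn2 : 2 ≤ n) :
    ∀ i : Fin n, 0 < deg E i := by
  intro i
  have h2 : (⟨0, by omega⟩ : Fin n) ≠ (⟨1, by omega⟩ : Fin n) := by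
    intro h
    simpa using congrArg Fin.val h
  have hne : ∃ j : Fin n, j ≠ i := by
    by_cases h0 : i = ⟨0, by omega⟩
    · exact ⟨⟨1, by omega⟩, by rw [h0]; exact h2.symm⟩
    · exact ⟨⟨0, by omega⟩, fun h => h0 (h ▸ rfl)⟩
  obtain ⟨j, hj⟩ := hne
  have h := hconn i j
  rcases Relation.ReflTransGen.cases_head h with h1 | ⟨c, ⟨e, he, hie, _⟩, _⟩
  · exact absurd h1.symm hj
  · unfold deg
    rw [Finset.card_pos]
    exact ⟨e, Finset.mem_filter.mpr ⟨he, hie⟩⟩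

lemma real_eigen (hk : 3 ≤ k) (hunif : ∀ e ∈ E, e.card = k)
    {y : Fin n → ℝ} (hy : ∃ i, y i ≠ 0) {μ : ℝ}
    (h : ∀ i, Qr E k y i = μ * y i ^ (k-1)) :
    IsEigenvalue (signlessT E k) (μ : ℂ) := by
  refine ⟨fun v => (y v : ℂ), ?_, ?_⟩
  · obtain ⟨i, hi⟩ := hy
    intro hcon
    apply hi
    have h2 := congrFun hcon i
    simpa using h2
  · intro i
    rw [tApply_real hk E hunif, h i]
    push_cast
    ring

lemma eig_le_lmax (hk : 3 ≤ k) (hunif : ∀ e ∈ E, e.card = k) (hn : 0 < n) {lam : ℂ}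
    (hlam : IsEigenvalue (signlessT E k) lam) {z : Fin n → ℝ} (hz : ∀ v, 0 < z v) :
    ‖lam‖ ≤ lmax E k hn z := by
  classical
  obtain ⟨x, hx0, hxeq⟩ := hlam
  obtain ⟨i, _, hmax⟩ := Finset.exists_max_image Finset.univ
    (fun v => ‖x v‖ / z v) ⟨⟨0, hn⟩, Finset.mem_univ _⟩
  set c := ‖x i‖ / z i with hcdef
  have hcpos : 0 < c := by
    have hex : ∃ j, x j ≠ 0 := by
      by_contra hcon
      push_neg at hcon
      exact hx0 (funext hcon)
    obtain ⟨j, hj⟩ := hex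
    have h1 : 0 < ‖x j‖ / z j :=
      div_pos (by simpa using hj) (hz j)
    exact lt_of_lt_of_le h1 (hmax j (Finset.mem_univ _))
  have hbound : ∀ v, ‖x v‖ ≤ c * z v := by
    intro v
    have h1 := hmax v (Finset.mem_univ _)
    rw [div_le_iff₀ (hz v)] at h1
    exact h1
  have hxi : ‖x i‖ = c * z i :=
    (div_mul_cancel₀ (‖x i‖) (ne_of_gt (hz i))).symm
  have hQle := row_le_lmax (k := k) E hn hz i
  have key : ‖lam‖ * (c ^ (k-1) * z i ^ (k-1))
      ≤ c ^ (k-1) * Qr E k z i := by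
    have h2 := hxeq i
    rw [tApply_signless hk E hunif] at h2
    have habs : ‖lam * (x i)^(k-1)‖
        = ‖lam‖ * (c ^ (k-1) * z i ^ (k-1)) := by
      rw [norm_mul, norm_pow, hxi, mul_pow]
    rw [← habs, ← h2]
    have hstep1 : ‖(deg E i : ℂ) * x i ^ (k-1)
          + ∑ e ∈ E.filter (fun e => i ∈ e), ∏ v ∈ e.erase i, x v‖
        ≤ (deg E i : ℝ) * (c * z i) ^ (k-1)
          + ∑ e ∈ E.filter (fun e => i ∈ e), ∏ v ∈ e.erase i, (c * z v) := by
      refine le_trans (norm_add_le _ _) (add_le_add ?_ ?_)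
      · rw [norm_mul, norm_pow, Complex.norm_natCast]
        refine mul_le_mul_of_nonneg_left ?_ (Nat.cast_nonneg _)
        exact pow_le_pow_left₀ (norm_nonneg _) (hbound i) _
      · refine le_trans (norm_sum_le _ _) (Finset.sum_le_sum (fun e he => ?_))
        rw [norm_prod]
        exact Finset.prod_le_prod (fun v _ => norm_nonneg _)
          (fun v _ => hbound v)
    refine le_trans hstep1 (le_of_eq ?_)
    unfold Qr
    rw [mul_add]
    congr 1
    · rw [mul_pow]
      ring
    · rw [Finset.mul_sum]
      refine Finset.sum_congr rfl (fun e he => ?_)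
      obtain ⟨heE, hie⟩ := Finset.mem_filter.mp he
      rw [Finset.prod_mul_distrib, Finset.prod_const,
        Finset.card_erase_of_mem hie, hunif e heE]
  have hA : (0:ℝ) < c ^ (k-1) * z i ^ (k-1) :=
    mul_pos (pow_pos hcpos _) (pow_pos (hz i) _)
  have key2 : ‖lam‖ * (c ^ (k-1) * z i ^ (k-1))
      ≤ lmax E k hn z * (c ^ (k-1) * z i ^ (k-1)) := by
    calc ‖lam‖ * (c ^ (k-1) * z i ^ (k-1))
        ≤ c ^ (k-1) * Qr E k z i := key
      _ ≤ c ^ (k-1) * (lmax E k hn z * z i ^ (k-1)) := by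
          exact mul_le_mul_of_nonneg_left hQle (le_of_lt (pow_pos hcpos _))
      _ = lmax E k hn z * (c ^ (k-1) * z i ^ (k-1)) := by ring
  exact le_of_mul_le_mul_right key2 hA

/-- The spectral radius equals `lmax` at the positive minimizer, which is a
positive eigenvector. -/
lemma specRad_eq (hk : 3 ≤ k) (hunif : ∀ e ∈ E, e.card = k) (hconn : HConnected E)
    (hn : 0 < n) (hdeg : ∀ i, 0 < deg E i) (b : Fin n → ℝ) (hb : ∀ i, 0 < b i) :
    ∃ y : Fin n → ℝ, (∀ v, 0 < y v) ∧
      (∀ i, Qr E k y i = specRad (signlessT E k) * y i ^ (k-1)) ∧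
      1 ≤ specRad (signlessT E k) ∧
      (∀ lam : ℂ, IsEigenvalue (signlessT E k) lam →
        ‖lam‖ ≤ specRad (signlessT E k)) := by
  classical
  obtain ⟨y, hy, hmin⟩ := exists_minimizer hk hunif hconn hn hdeg b hb
  set μ := lmax E k hn y with hμdef
  have heig : ∀ i, Qr E k y i = μ * y i ^ (k-1) :=
    minimizer_eigen hk hunif hconn hn hdeg hy hmin
  have hμ1 : (1:ℝ) ≤ μ := by
    have h1 := deg_le_lmax (k := k) E hn hy ⟨0, hn⟩
    have h2 : (1:ℝ) ≤ (deg E ⟨0, hn⟩ : ℝ) := by exact_mod_cast hdeg ⟨0, hn⟩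
    rw [hμdef]
    linarith
  have hμeig : IsEigenvalue (signlessT E k) (μ : ℂ) :=
    real_eigen hk hunif ⟨⟨0, hn⟩, ne_of_gt (hy ⟨0, hn⟩)⟩ heig
  set S := {r : ℝ | ∃ lam : ℂ, IsEigenvalue (signlessT E k) lam
    ∧ r = ‖lam‖} with hSdef
  have hμS : μ ∈ S := by
    refine ⟨(μ : ℂ), hμeig, ?_⟩
    rw [Complex.norm_of_nonneg (by linarith)]
  have hub : ∀ r ∈ S, r ≤ μ := by
    rintro r ⟨lam, hlam, rfl⟩
    exact eig_le_lmax hk hunif hn hlam hy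
  have hspec : specRad (signlessT E k) = μ := by
    unfold specRad
    rw [← hSdef]
    exact le_antisymm (csSup_le ⟨μ, hμS⟩ hub) (le_csSup ⟨μ, hub⟩ hμS)
  refine ⟨y, hy, ?_, ?_, ?_⟩
  · rw [hspec]; exact heig
  · rw [hspec]; exact hμ1
  · intro lam hlam
    rw [hspec]
    exact hub _ ⟨lam, hlam, rfl⟩

end Stmt15Aux

namespace Stmt15Aux

open Finset

/-! Quadratic root facts. `G D1 D2 B = (D1+D2+√((D1-D2)²+4B))/2`. -/

noncomputable def Groot (D1 D2 B : ℝ) : ℝ :=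
  (D1 + D2 + Real.sqrt ((D1 - D2)^2 + 4*B)) / 2

lemma Groot_arg_nonneg {D1 D2 B : ℝ} (hB : 0 ≤ B) : 0 ≤ (D1 - D2)^2 + 4*B := by
  positivity

lemma Groot_facts {D1 D2 B : ℝ} (hB : 0 ≤ B) :
    D1 ≤ Groot D1 D2 B ∧ D2 ≤ Groot D1 D2 B ∧
      (Groot D1 D2 B - D1) * (Groot D1 D2 B - D2) = B := by
  have harg := Groot_arg_nonneg (D1 := D1) (D2 := D2) hB
  set s := Real.sqrt ((D1 - D2)^2 + 4*B) with hs
  have hs2 : s^2 = (D1 - D2)^2 + 4*B := Real.sq_sqrt harg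
  have hs0 : 0 ≤ s := Real.sqrt_nonneg _
  have habs : |D1 - D2| ≤ s := by
    rw [hs, ← Real.sqrt_sq_eq_abs]
    exact Real.sqrt_le_sqrt (by nlinarith)
  have h1 : D1 - D2 ≤ s := le_trans (le_abs_self _) habs
  have h2 : D2 - D1 ≤ s := by
    have h3 := le_abs_self (D2 - D1)
    rw [abs_sub_comm] at h3
    linarith
  refine ⟨by unfold Groot; rw [← hs]; linarith, by unfold Groot; rw [← hs]; linarith, ?_⟩
  unfold Groot
  rw [← hs]
  nlinarith [hs2]

lemma Groot_le {D1 D2 B z : ℝ} (hB : 0 ≤ B) (hz1 : D1 ≤ z) (hz2 : D2 ≤ z)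
    (hprod : B ≤ (z - D1) * (z - D2)) : Groot D1 D2 B ≤ z := by
  have harg := Groot_arg_nonneg (D1 := D1) (D2 := D2) hB
  have hkey : Real.sqrt ((D1 - D2)^2 + 4*B) ≤ 2*z - D1 - D2 := by
    rw [show 2*z - D1 - D2 = Real.sqrt ((2*z - D1 - D2)^2) from
      (Real.sqrt_sq (by linarith)).symm]
    exact Real.sqrt_le_sqrt (by nlinarith)
  unfold Groot
  linarith

lemma le_Groot {D1 D2 B z : ℝ} (hB : 0 ≤ B) (hz1 : D1 ≤ z) (hz2 : D2 ≤ z)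
    (hprod : (z - D1) * (z - D2) ≤ B) : z ≤ Groot D1 D2 B := by
  have hkey : 2*z - D1 - D2 ≤ Real.sqrt ((D1 - D2)^2 + 4*B) := by
    rw [show 2*z - D1 - D2 = Real.sqrt ((2*z - D1 - D2)^2) from
      (Real.sqrt_sq (by linarith)).symm]
    exact Real.sqrt_le_sqrt (by nlinarith)
  unfold Groot
  linarith

lemma prod_ge_of_Groot_le {D1 D2 B z : ℝ} (hB : 0 ≤ B) (hz : Groot D1 D2 B ≤ z) :
    D1 ≤ z ∧ D2 ≤ z ∧ B ≤ (z - D1) * (z - D2) := by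
  obtain ⟨h1, h2, h3⟩ := Groot_facts (D1 := D1) (D2 := D2) hB
  refine ⟨le_trans h1 hz, le_trans h2 hz, ?_⟩
  nlinarith

lemma Groot_const {D1 D2 B1 B2 c : ℝ} (h1 : D1 + B1 = c) (h2 : D2 + B2 = c)
    (hB1 : 0 ≤ B1) (hB2 : 0 ≤ B2) : Groot D1 D2 (B1 * B2) = c := by
  have harg : (D1 - D2)^2 + 4*(B1*B2) = (B1 + B2)^2 := by nlinarith
  unfold Groot
  rw [harg, Real.sqrt_sq (by linarith)]
  linarith

/-! Forcing lemmas. -/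

lemma forcing_sum {α : Type*} {s : Finset α} {f g : α → ℝ}
    (h : ∀ e ∈ s, f e ≤ g e) (heq : ∑ e ∈ s, f e = ∑ e ∈ s, g e) :
    ∀ e ∈ s, f e = g e := by
  intro e he
  by_contra hne
  have hlt : f e < g e := lt_of_le_of_ne (h e he) hne
  have := Finset.sum_lt_sum h ⟨e, he, hlt⟩
  linarith

lemma forcing_prod_max {α : Type*} [DecidableEq α] {s : Finset α} {w : α → ℝ} {W : ℝ}
    (hpos : ∀ v ∈ s, 0 < w v) (hle : ∀ v ∈ s, w v ≤ W)
    (heq : ∏ v ∈ s, w v = W ^ s.card) : ∀ v ∈ s, w v = W := by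
  intro v hv
  have hW : 0 < W := lt_of_lt_of_le (hpos v hv) (hle v hv)
  obtain ⟨m, hm⟩ : ∃ m, s.card = m + 1 := by
    have h1 : 1 ≤ s.card := Finset.card_pos.mpr ⟨v, hv⟩
    exact ⟨s.card - 1, by omega⟩
  have hsplit : ∏ u ∈ s, w u = w v * ∏ u ∈ s.erase v, w u :=
    (Finset.mul_prod_erase _ _ hv).symm
  have hme : (s.erase v).card = m := by
    rw [Finset.card_erase_of_mem hv, hm]
    omega
  have hprodle : ∏ u ∈ s.erase v, w u ≤ W ^ m := by
    rw [← hme, ← Finset.prod_const W]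
    exact Finset.prod_le_prod
      (fun u hu => le_of_lt (hpos u (Finset.mem_of_mem_erase hu)))
      (fun u hu => hle u (Finset.mem_of_mem_erase hu))
  have hWpow : (0:ℝ) < W ^ m := pow_pos hW _
  have h4 : W ^ (m+1) ≤ w v * W ^ m := by
    rw [← hm, ← heq, hsplit]
    exact mul_le_mul_of_nonneg_left hprodle (le_of_lt (hpos v hv))
  rw [pow_succ] at h4
  have h5 : W * W ^ m ≤ w v * W ^ m := by nlinarith [h4]
  exact le_antisymm (hle v hv) (le_of_mul_le_mul_right h5 hWpow)

lemma forcing_prod_min {α : Type*} [DecidableEq α] {s : Finset α} {w : α → ℝ} {W : ℝ}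
    (hW : 0 < W) (hge : ∀ v ∈ s, W ≤ w v)
    (heq : ∏ v ∈ s, w v = W ^ s.card) : ∀ v ∈ s, w v = W := by
  intro v hv
  obtain ⟨m, hm⟩ : ∃ m, s.card = m + 1 := by
    have h1 : 1 ≤ s.card := Finset.card_pos.mpr ⟨v, hv⟩
    exact ⟨s.card - 1, by omega⟩
  have hsplit : ∏ u ∈ s, w u = w v * ∏ u ∈ s.erase v, w u :=
    (Finset.mul_prod_erase _ _ hv).symm
  have hme : (s.erase v).card = m := by
    rw [Finset.card_erase_of_mem hv, hm]
    omega
  have hprodge : W ^ m ≤ ∏ u ∈ s.erase v, w u := by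
    rw [← hme, ← Finset.prod_const W]
    exact Finset.prod_le_prod (fun u _ => le_of_lt hW)
      (fun u hu => hge u (Finset.mem_of_mem_erase hu))
  have hWpow : (0:ℝ) < W ^ m := pow_pos hW _
  have hwv : 0 < w v := lt_of_lt_of_le hW (hge v hv)
  have h4 : w v * W ^ m ≤ W ^ (m+1) := by
    rw [← hm, ← heq, hsplit]
    exact mul_le_mul_of_nonneg_left hprodge (le_of_lt hwv)
  rw [pow_succ] at h4
  have h5 : w v * W ^ m ≤ W * W ^ m := by nlinarith [h4]
  exact le_antisymm (le_of_mul_le_mul_right h5 hWpow) (hge v hv)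

lemma eq_of_mul_eq_of_le {a A b B : ℝ} (h1 : a ≤ A) (h2 : b ≤ B)
    (hab : a * b = A * B) (ha : 0 < a) (hb : 0 < b) : a = A ∧ b = B := by
  constructor
  · refine le_antisymm h1 (by nlinarith)
  · refine le_antisymm h2 (by nlinarith)

lemma eq_of_mul_eq_of_ge {a A b B : ℝ} (h1 : A ≤ a) (h2 : B ≤ b)
    (hab : a * b = A * B) (hA : 0 < A) (hB : 0 < B) : a = A ∧ b = B := by
  constructor
  · refine le_antisymm (by nlinarith) h1
  · refine le_antisymm (by nlinarith) h2

end Stmt15Aux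

namespace Stmt15Aux

open Finset

variable {n k : ℕ} {E : Finset (Finset (Fin n))}

lemma rho_gt_deg {y : Fin n → ℝ} {ρ : ℝ} {i : Fin n}
    (hdeg : 0 < deg E i) (hy : ∀ v, 0 < y v)
    (heig : Qr E k y i = ρ * y i ^ (k-1)) : (deg E i : ℝ) < ρ := by
  have hne : (E.filter (fun e => i ∈ e)).Nonempty := Finset.card_pos.mp hdeg
  have hsum : 0 < ∑ e ∈ E.filter (fun e => i ∈ e), ∏ v ∈ e.erase i, y v :=
    Finset.sum_pos (fun e _ => Finset.prod_pos (fun v _ => hy v)) hne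
  unfold Qr at heig
  have hpow : 0 < y i ^ (k-1) := pow_pos (hy i) _
  by_contra hcon
  push_neg at hcon
  have h2 : (ρ - (deg E i : ℝ)) * y i ^ (k-1) ≤ 0 :=
    mul_nonpos_of_nonpos_of_nonneg (by linarith) (le_of_lt hpow)
  nlinarith [heig, hsum, h2]

lemma row_sum_eq {y : Fin n → ℝ} {ρ : ℝ} {i : Fin n}
    (heig : Qr E k y i = ρ * y i ^ (k-1)) :
    ∑ e ∈ E.filter (fun e => i ∈ e), ∏ v ∈ e.erase i, y v
      = (ρ - (deg E i : ℝ)) * y i ^ (k-1) := by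
  unfold Qr at heig
  nlinarith [heig]

lemma edge_prod_eq {b w : Fin n → ℝ} {y : Fin n → ℝ} (hyw : ∀ v, y v = b v * w v)
    {e : Finset (Fin n)} {i : Fin n} :
    ∏ v ∈ e.erase i, y v = (∏ v ∈ e.erase i, b v) * ∏ v ∈ e.erase i, w v := by
  rw [← Finset.prod_mul_distrib]
  exact Finset.prod_congr rfl (fun v _ => hyw v)

lemma rowUB (hunif : ∀ e ∈ E, e.card = k) {y b' b w : Fin n → ℝ} {ρ W : ℝ} {i : Fin n}
    (hb : ∀ v, 0 < b v) (hw : ∀ v, 0 < w v) (hyw : ∀ v, y v = b v * w v)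
    (heig : Qr E k y i = ρ * y i ^ (k-1))
    (hSig : ∑ e ∈ E.filter (fun e => i ∈ e), ∏ v ∈ e.erase i, b v = b' i * b i ^ (k-1))
    (hW : 0 ≤ W)
    (hWn : ∀ e ∈ E.filter (fun e => i ∈ e), ∀ v ∈ e.erase i, w v ≤ W) :
    (ρ - (deg E i : ℝ)) * w i ^ (k-1) ≤ b' i * W ^ (k-1) := by
  have hsum := row_sum_eq heig
  have hperedge : ∀ e ∈ E.filter (fun e => i ∈ e),
      ∏ v ∈ e.erase i, y v ≤ (∏ v ∈ e.erase i, b v) * W ^ (k-1) := by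
    intro e he
    obtain ⟨heE, hie⟩ := Finset.mem_filter.mp he
    rw [edge_prod_eq hyw]
    refine mul_le_mul_of_nonneg_left ?_
      (Finset.prod_nonneg (fun v _ => le_of_lt (hb v)))
    rw [← hunif e heE, ← Finset.card_erase_of_mem hie, ← Finset.prod_const W]
    exact Finset.prod_le_prod (fun v _ => le_of_lt (hw v)) (fun v hv => hWn e he v hv)
  have hchain : (ρ - (deg E i : ℝ)) * y i ^ (k-1) ≤ b' i * b i ^ (k-1) * W ^ (k-1) := by
    rw [← hsum, ← hSig, Finset.sum_mul]
    exact Finset.sum_le_sum hperedge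
  have hyi : y i ^ (k-1) = b i ^ (k-1) * w i ^ (k-1) := by
    rw [hyw i, mul_pow]
  rw [hyi] at hchain
  have hbpow : (0:ℝ) < b i ^ (k-1) := pow_pos (hb i) _
  refine le_of_mul_le_mul_right ?_ hbpow
  nlinarith [hchain]

lemma rowLB (hunif : ∀ e ∈ E, e.card = k) {y b' b w : Fin n → ℝ} {ρ W : ℝ} {i : Fin n}
    (hb : ∀ v, 0 < b v) (hw : ∀ v, 0 < w v) (hyw : ∀ v, y v = b v * w v)
    (heig : Qr E k y i = ρ * y i ^ (k-1))
    (hSig : ∑ e ∈ E.filter (fun e => i ∈ e), ∏ v ∈ e.erase i, b v = b' i * b i ^ (k-1))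
    (hW : 0 ≤ W)
    (hWn : ∀ e ∈ E.filter (fun e => i ∈ e), ∀ v ∈ e.erase i, W ≤ w v) :
    b' i * W ^ (k-1) ≤ (ρ - (deg E i : ℝ)) * w i ^ (k-1) := by
  have hsum := row_sum_eq heig
  have hperedge : ∀ e ∈ E.filter (fun e => i ∈ e),
      (∏ v ∈ e.erase i, b v) * W ^ (k-1) ≤ ∏ v ∈ e.erase i, y v := by
    intro e he
    obtain ⟨heE, hie⟩ := Finset.mem_filter.mp he
    rw [edge_prod_eq hyw]
    refine mul_le_mul_of_nonneg_left ?_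
      (Finset.prod_nonneg (fun v _ => le_of_lt (hb v)))
    rw [← hunif e heE, ← Finset.card_erase_of_mem hie, ← Finset.prod_const W]
    exact Finset.prod_le_prod (fun v _ => hW) (fun v hv => hWn e he v hv)
  have hchain : b' i * b i ^ (k-1) * W ^ (k-1) ≤ (ρ - (deg E i : ℝ)) * y i ^ (k-1) := by
    rw [← hsum, ← hSig, Finset.sum_mul]
    exact Finset.sum_le_sum hperedge
  have hyi : y i ^ (k-1) = b i ^ (k-1) * w i ^ (k-1) := by
    rw [hyw i, mul_pow]
  rw [hyi] at hchain
  have hbpow : (0:ℝ) < b i ^ (k-1) := pow_pos (hb i) _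
  refine le_of_mul_le_mul_right ?_ hbpow
  nlinarith [hchain]

lemma rowUB_forcing (hunif : ∀ e ∈ E, e.card = k) {y b' b w : Fin n → ℝ} {ρ W : ℝ}
    {i : Fin n}
    (hb : ∀ v, 0 < b v) (hw : ∀ v, 0 < w v) (hyw : ∀ v, y v = b v * w v)
    (heig : Qr E k y i = ρ * y i ^ (k-1))
    (hSig : ∑ e ∈ E.filter (fun e => i ∈ e), ∏ v ∈ e.erase i, b v = b' i * b i ^ (k-1))
    (hW : 0 ≤ W)
    (hWn : ∀ e ∈ E.filter (fun e => i ∈ e), ∀ v ∈ e.erase i, w v ≤ W)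
    (heqrow : (ρ - (deg E i : ℝ)) * w i ^ (k-1) = b' i * W ^ (k-1)) :
    ∀ e ∈ E.filter (fun e => i ∈ e), ∀ v ∈ e.erase i, w v = W := by
  have hsum := row_sum_eq heig
  have hperedge : ∀ e ∈ E.filter (fun e => i ∈ e),
      ∏ v ∈ e.erase i, y v ≤ (∏ v ∈ e.erase i, b v) * W ^ (k-1) := by
    intro e he
    obtain ⟨heE, hie⟩ := Finset.mem_filter.mp he
    rw [edge_prod_eq hyw]
    refine mul_le_mul_of_nonneg_left ?_
      (Finset.prod_nonneg (fun v _ => le_of_lt (hb v)))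
    rw [← hunif e heE, ← Finset.card_erase_of_mem hie, ← Finset.prod_const W]
    exact Finset.prod_le_prod (fun v _ => le_of_lt (hw v)) (fun v hv => hWn e he v hv)
  have hyi : y i ^ (k-1) = b i ^ (k-1) * w i ^ (k-1) := by
    rw [hyw i, mul_pow]
  have hsumeq : ∑ e ∈ E.filter (fun e => i ∈ e), ∏ v ∈ e.erase i, y v
      = ∑ e ∈ E.filter (fun e => i ∈ e), (∏ v ∈ e.erase i, b v) * W ^ (k-1) := by
    rw [← Finset.sum_mul, hSig, hsum, hyi]
    linear_combination (b i ^ (k-1)) * heqrow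
  have hforce := forcing_sum hperedge hsumeq
  intro e he v hv
  obtain ⟨heE, hie⟩ := Finset.mem_filter.mp he
  have h1 := hforce e he
  rw [edge_prod_eq hyw] at h1
  have hbprod : (0:ℝ) < ∏ v ∈ e.erase i, b v := Finset.prod_pos (fun v _ => hb v)
  have h2 : ∏ v ∈ e.erase i, w v = W ^ (k-1) :=
    mul_left_cancel₀ (ne_of_gt hbprod) h1
  have h3 : ∏ v ∈ e.erase i, w v = W ^ (e.erase i).card := by
    rw [Finset.card_erase_of_mem hie, hunif e heE, h2]
  exact forcing_prod_max (fun u _ => hw u) (fun u hu => hWn e he u hu) h3 v hv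

lemma rowLB_forcing (hunif : ∀ e ∈ E, e.card = k) {y b' b w : Fin n → ℝ} {ρ W : ℝ}
    {i : Fin n}
    (hb : ∀ v, 0 < b v) (hw : ∀ v, 0 < w v) (hyw : ∀ v, y v = b v * w v)
    (heig : Qr E k y i = ρ * y i ^ (k-1))
    (hSig : ∑ e ∈ E.filter (fun e => i ∈ e), ∏ v ∈ e.erase i, b v = b' i * b i ^ (k-1))
    (hW : 0 < W)
    (hWn : ∀ e ∈ E.filter (fun e => i ∈ e), ∀ v ∈ e.erase i, W ≤ w v)
    (heqrow : (ρ - (deg E i : ℝ)) * w i ^ (k-1) = b' i * W ^ (k-1)) :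
    ∀ e ∈ E.filter (fun e => i ∈ e), ∀ v ∈ e.erase i, w v = W := by
  have hsum := row_sum_eq heig
  have hperedge : ∀ e ∈ E.filter (fun e => i ∈ e),
      (∏ v ∈ e.erase i, b v) * W ^ (k-1) ≤ ∏ v ∈ e.erase i, y v := by
    intro e he
    obtain ⟨heE, hie⟩ := Finset.mem_filter.mp he
    rw [edge_prod_eq hyw]
    refine mul_le_mul_of_nonneg_left ?_
      (Finset.prod_nonneg (fun v _ => le_of_lt (hb v)))
    rw [← hunif e heE, ← Finset.card_erase_of_mem hie, ← Finset.prod_const W]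
    exact Finset.prod_le_prod (fun v _ => le_of_lt hW) (fun v hv => hWn e he v hv)
  have hyi : y i ^ (k-1) = b i ^ (k-1) * w i ^ (k-1) := by
    rw [hyw i, mul_pow]
  have hsumeq : ∑ e ∈ E.filter (fun e => i ∈ e), (∏ v ∈ e.erase i, b v) * W ^ (k-1)
      = ∑ e ∈ E.filter (fun e => i ∈ e), ∏ v ∈ e.erase i, y v := by
    rw [← Finset.sum_mul, hSig, hsum, hyi]
    linear_combination (-(b i ^ (k-1))) * heqrow
  have hforce := forcing_sum hperedge hsumeq
  intro e he v hv
  obtain ⟨heE, hie⟩ := Finset.mem_filter.mp he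
  have h1 := hforce e he
  rw [edge_prod_eq hyw] at h1
  have hbprod : (0:ℝ) < ∏ v ∈ e.erase i, b v := Finset.prod_pos (fun v _ => hb v)
  have h2 : ∏ v ∈ e.erase i, w v = W ^ (k-1) :=
    mul_left_cancel₀ (ne_of_gt hbprod) h1.symm
  have h3 : ∏ v ∈ e.erase i, w v = W ^ (e.erase i).card := by
    rw [Finset.card_erase_of_mem hie, hunif e heE, h2]
  exact forcing_prod_min hW (fun u hu => hWn e he u hu) h3 v hv

end Stmt15Aux

namespace Stmt15Aux

open Finset

variable {n k : ℕ} {E : Finset (Finset (Fin n))}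

lemma nbhd_nonempty (hk : 3 ≤ k) (hunif : ∀ e ∈ E, e.card = k) {u : Fin n}
    (hdeg : 0 < deg E u) :
    ((E.filter (fun e => u ∈ e)).biUnion (fun e => e.erase u)).Nonempty := by
  obtain ⟨e, he⟩ := Finset.card_pos.mp hdeg
  obtain ⟨heE, hue⟩ := Finset.mem_filter.mp he
  have hc : (e.erase u).card = k - 1 := by
    rw [Finset.card_erase_of_mem hue, hunif e heE]
  have hne : (e.erase u).Nonempty := by
    rw [← Finset.card_pos, hc]
    omega
  obtain ⟨v, hv⟩ := hne
  exact ⟨v, Finset.mem_biUnion.mpr ⟨e, he, hv⟩⟩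

/-- At a global maximum of `w`, pick a best neighbor and derive the pair bounds. -/
lemma atmax (hk : 3 ≤ k) (hunif : ∀ e ∈ E, e.card = k)
    {y b' b w : Fin n → ℝ} {ρ : ℝ}
    (hb : ∀ v, 0 < b v) (hw : ∀ v, 0 < w v) (hyw : ∀ v, y v = b v * w v)
    (heig : ∀ i, Qr E k y i = ρ * y i ^ (k-1))
    (hSig : ∀ i, ∑ e ∈ E.filter (fun e => i ∈ e), ∏ v ∈ e.erase i, b v
      = b' i * b i ^ (k-1))
    (hb'pos : ∀ i, 0 < b' i) (hdeg : ∀ i, 0 < deg E i)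
    {u : Fin n} (hu : ∀ v, w v ≤ w u) :
    ∃ vm e₀, e₀ ∈ E ∧ u ∈ e₀ ∧ vm ∈ e₀ ∧ vm ≠ u ∧
      (∀ e ∈ E.filter (fun e => u ∈ e), ∀ z ∈ e.erase u, w z ≤ w vm) ∧
      (ρ - (deg E u : ℝ)) * w u ^ (k-1) ≤ b' u * w vm ^ (k-1) ∧
      (ρ - (deg E vm : ℝ)) * w vm ^ (k-1) ≤ b' vm * w u ^ (k-1) ∧
      (ρ - (deg E u : ℝ)) * (ρ - (deg E vm : ℝ)) ≤ b' u * b' vm := by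
  classical
  have hy : ∀ v, 0 < y v := fun v => by rw [hyw v]; exact mul_pos (hb v) (hw v)
  obtain ⟨vm, hvmmem, hvmmax⟩ := Finset.exists_max_image _ w (nbhd_nonempty hk hunif (hdeg u))
  obtain ⟨e₀, he₀f, hvm₀⟩ := Finset.mem_biUnion.mp hvmmem
  obtain ⟨he₀E, hue₀⟩ := Finset.mem_filter.mp he₀f
  obtain ⟨hvmne, hvme₀⟩ := Finset.mem_erase.mp hvm₀
  have hnb : ∀ e ∈ E.filter (fun e => u ∈ e), ∀ z ∈ e.erase u, w z ≤ w vm := by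
    intro e he z hz
    exact hvmmax z (Finset.mem_biUnion.mpr ⟨e, he, hz⟩)
  have h1 : (ρ - (deg E u : ℝ)) * w u ^ (k-1) ≤ b' u * w vm ^ (k-1) :=
    rowUB hunif hb hw hyw (heig u) (hSig u) (le_of_lt (hw vm)) hnb
  have h2 : (ρ - (deg E vm : ℝ)) * w vm ^ (k-1) ≤ b' vm * w u ^ (k-1) := by
    refine rowUB hunif hb hw hyw (heig vm) (hSig vm) (le_of_lt (hw u)) ?_
    intro e _ z _
    exact hu z
  have hρu : (deg E u : ℝ) < ρ := rho_gt_deg (hdeg u) hy (heig u)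
  have hρv : (deg E vm : ℝ) < ρ := rho_gt_deg (hdeg vm) hy (heig vm)
  refine ⟨vm, e₀, he₀E, hue₀, hvme₀, hvmne, hnb, h1, h2, ?_⟩
  have hmul : ((ρ - (deg E u : ℝ)) * w u ^ (k-1)) * ((ρ - (deg E vm : ℝ)) * w vm ^ (k-1))
      ≤ (b' u * w vm ^ (k-1)) * (b' vm * w u ^ (k-1)) := by
    refine mul_le_mul h1 h2 ?_ ?_
    · exact mul_nonneg (by linarith) (le_of_lt (pow_pos (hw vm) _))
    · exact mul_nonneg (le_of_lt (hb'pos u)) (le_of_lt (pow_pos (hw vm) _))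
  have hpow : (0:ℝ) < w u ^ (k-1) * w vm ^ (k-1) :=
    mul_pos (pow_pos (hw u) _) (pow_pos (hw vm) _)
  refine le_of_mul_le_mul_right ?_ hpow
  nlinarith [hmul]

/-- At a global minimum of `w`, pick a worst neighbor and derive the pair bounds. -/
lemma atmin (hk : 3 ≤ k) (hunif : ∀ e ∈ E, e.card = k)
    {y b' b w : Fin n → ℝ} {ρ : ℝ}
    (hb : ∀ v, 0 < b v) (hw : ∀ v, 0 < w v) (hyw : ∀ v, y v = b v * w v)
    (heig : ∀ i, Qr E k y i = ρ * y i ^ (k-1))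
    (hSig : ∀ i, ∑ e ∈ E.filter (fun e => i ∈ e), ∏ v ∈ e.erase i, b v
      = b' i * b i ^ (k-1))
    (hb'pos : ∀ i, 0 < b' i) (hdeg : ∀ i, 0 < deg E i)
    {u : Fin n} (hu : ∀ v, w u ≤ w v) :
    ∃ vm e₀, e₀ ∈ E ∧ u ∈ e₀ ∧ vm ∈ e₀ ∧ vm ≠ u ∧
      (∀ e ∈ E.filter (fun e => u ∈ e), ∀ z ∈ e.erase u, w vm ≤ w z) ∧
      b' u * w vm ^ (k-1) ≤ (ρ - (deg E u : ℝ)) * w u ^ (k-1) ∧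
      b' vm * w u ^ (k-1) ≤ (ρ - (deg E vm : ℝ)) * w vm ^ (k-1) ∧
      b' u * b' vm ≤ (ρ - (deg E u : ℝ)) * (ρ - (deg E vm : ℝ)) := by
  classical
  have hy : ∀ v, 0 < y v := fun v => by rw [hyw v]; exact mul_pos (hb v) (hw v)
  obtain ⟨vm, hvmmem, hvmmin⟩ := Finset.exists_min_image _ w (nbhd_nonempty hk hunif (hdeg u))
  obtain ⟨e₀, he₀f, hvm₀⟩ := Finset.mem_biUnion.mp hvmmem
  obtain ⟨he₀E, hue₀⟩ := Finset.mem_filter.mp he₀f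
  obtain ⟨hvmne, hvme₀⟩ := Finset.mem_erase.mp hvm₀
  have hnb : ∀ e ∈ E.filter (fun e => u ∈ e), ∀ z ∈ e.erase u, w vm ≤ w z := by
    intro e he z hz
    exact hvmmin z (Finset.mem_biUnion.mpr ⟨e, he, hz⟩)
  have h1 : b' u * w vm ^ (k-1) ≤ (ρ - (deg E u : ℝ)) * w u ^ (k-1) :=
    rowLB hunif hb hw hyw (heig u) (hSig u) (le_of_lt (hw vm)) hnb
  have h2 : b' vm * w u ^ (k-1) ≤ (ρ - (deg E vm : ℝ)) * w vm ^ (k-1) := by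
    refine rowLB hunif hb hw hyw (heig vm) (hSig vm) (le_of_lt (hw u)) ?_
    intro e _ z _
    exact hu z
  have hρu : (deg E u : ℝ) < ρ := rho_gt_deg (hdeg u) hy (heig u)
  have hρv : (deg E vm : ℝ) < ρ := rho_gt_deg (hdeg vm) hy (heig vm)
  refine ⟨vm, e₀, he₀E, hue₀, hvme₀, hvmne, hnb, h1, h2, ?_⟩
  have hmul : (b' u * w vm ^ (k-1)) * (b' vm * w u ^ (k-1))
      ≤ ((ρ - (deg E u : ℝ)) * w u ^ (k-1)) * ((ρ - (deg E vm : ℝ)) * w vm ^ (k-1)) := by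
    refine mul_le_mul h1 h2 ?_ ?_
    · exact mul_nonneg (le_of_lt (hb'pos vm)) (le_of_lt (pow_pos (hw u) _))
    · exact mul_nonneg (by linarith) (le_of_lt (pow_pos (hw u) _))
  have hpow : (0:ℝ) < w u ^ (k-1) * w vm ^ (k-1) :=
    mul_pos (pow_pos (hw u) _) (pow_pos (hw vm) _)
  refine le_of_mul_le_mul_right ?_ hpow
  nlinarith [hmul]

/-- Equality analysis at a global maximum of `w`. -/
lemma eqmax_at (hk : 3 ≤ k) (hunif : ∀ e ∈ E, e.card = k)
    {y b' b w : Fin n → ℝ} {ρ : ℝ}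
    (hb : ∀ v, 0 < b v) (hw : ∀ v, 0 < w v) (hyw : ∀ v, y v = b v * w v)
    (heig : ∀ i, Qr E k y i = ρ * y i ^ (k-1))
    (hSig : ∀ i, ∑ e ∈ E.filter (fun e => i ∈ e), ∏ v ∈ e.erase i, b v
      = b' i * b i ^ (k-1))
    (hb'pos : ∀ i, 0 < b' i) (hdeg : ∀ i, 0 < deg E i)
    (hsup : ∀ i j : Fin n, ∀ e ∈ E, i ∈ e → j ∈ e → i ≠ j →
      Groot (deg E i : ℝ) (deg E j : ℝ) (b' i * b' j) ≤ ρ)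
    {u : Fin n} (hu : ∀ v, w v ≤ w u) :
    (∀ e ∈ E.filter (fun e => u ∈ e), ∀ z ∈ e.erase u, w z = w u) ∧
      ρ = (deg E u : ℝ) + b' u := by
  classical
  have hy : ∀ v, 0 < y v := fun v => by rw [hyw v]; exact mul_pos (hb v) (hw v)
  obtain ⟨vm, e₀, he₀E, hue₀, hvme₀, hvmne, hnb, h1, h2, hprodle⟩ :=
    atmax hk hunif hb hw hyw heig hSig hb'pos hdeg hu
  have hρu : (deg E u : ℝ) < ρ := rho_gt_deg (hdeg u) hy (heig u)
  have hρv : (deg E vm : ℝ) < ρ := rho_gt_deg (hdeg vm) hy (heig vm)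
  have hG := hsup u vm e₀ he₀E hue₀ hvme₀ (Ne.symm hvmne)
  have hprodge : b' u * b' vm ≤ (ρ - (deg E u : ℝ)) * (ρ - (deg E vm : ℝ)) :=
    (prod_ge_of_Groot_le (le_of_lt (mul_pos (hb'pos u) (hb'pos vm))) hG).2.2
  have hprodeq : (ρ - (deg E u : ℝ)) * (ρ - (deg E vm : ℝ)) = b' u * b' vm :=
    le_antisymm hprodle hprodge
  have hab : ((ρ - (deg E u : ℝ)) * w u ^ (k-1)) * ((ρ - (deg E vm : ℝ)) * w vm ^ (k-1))
      = (b' u * w vm ^ (k-1)) * (b' vm * w u ^ (k-1)) := by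
    linear_combination (w u ^ (k-1) * w vm ^ (k-1)) * hprodeq
  obtain ⟨hA, hB⟩ := eq_of_mul_eq_of_le h1 h2 hab
    (mul_pos (by linarith) (pow_pos (hw u) _))
    (mul_pos (by linarith) (pow_pos (hw vm) _))
  have hforceu : ∀ e ∈ E.filter (fun e => u ∈ e), ∀ z ∈ e.erase u, w z = w vm :=
    rowUB_forcing hunif hb hw hyw (heig u) (hSig u) (le_of_lt (hw vm)) hnb hA
  have hforcev : ∀ e ∈ E.filter (fun e => vm ∈ e), ∀ z ∈ e.erase vm, w z = w u := by
    refine rowUB_forcing hunif hb hw hyw (heig vm) (hSig vm) (le_of_lt (hw u))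
      (fun e _ z _ => hu z) hB
  -- find a third vertex in e₀
  have hcard : 1 < (e₀.erase vm).card := by
    rw [Finset.card_erase_of_mem hvme₀, hunif e₀ he₀E]
    omega
  obtain ⟨z₀, hz₀, hz₀u⟩ := Finset.exists_mem_ne hcard u
  have hz₀vm : z₀ ∈ e₀.erase u :=
    Finset.mem_erase.mpr ⟨hz₀u, Finset.mem_of_mem_erase hz₀⟩
  have hwz₀1 : w z₀ = w u :=
    hforcev e₀ (Finset.mem_filter.mpr ⟨he₀E, hvme₀⟩) z₀ hz₀
  have hwz₀2 : w z₀ = w vm :=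
    hforceu e₀ (Finset.mem_filter.mpr ⟨he₀E, hue₀⟩) z₀ hz₀vm
  have hvmu : w vm = w u := by rw [← hwz₀2, hwz₀1]
  constructor
  · intro e he z hz
    rw [hforceu e he z hz, hvmu]
  · have hA' : (ρ - (deg E u : ℝ)) * w u ^ (k-1) = b' u * w u ^ (k-1) := by
      rw [hA, hvmu]
    have := mul_right_cancel₀ (ne_of_gt (pow_pos (hw u) (k-1))) hA'
    linarith

/-- Equality analysis at a global minimum of `w`. -/
lemma eqmin_at (hk : 3 ≤ k) (hunif : ∀ e ∈ E, e.card = k)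
    {y b' b w : Fin n → ℝ} {ρ : ℝ}
    (hb : ∀ v, 0 < b v) (hw : ∀ v, 0 < w v) (hyw : ∀ v, y v = b v * w v)
    (heig : ∀ i, Qr E k y i = ρ * y i ^ (k-1))
    (hSig : ∀ i, ∑ e ∈ E.filter (fun e => i ∈ e), ∏ v ∈ e.erase i, b v
      = b' i * b i ^ (k-1))
    (hb'pos : ∀ i, 0 < b' i) (hdeg : ∀ i, 0 < deg E i)
    (hinf : ∀ i j : Fin n, ∀ e ∈ E, i ∈ e → j ∈ e → i ≠ j →
      ρ ≤ Groot (deg E i : ℝ) (deg E j : ℝ) (b' i * b' j))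
    {u : Fin n} (hu : ∀ v, w u ≤ w v) :
    (∀ e ∈ E.filter (fun e => u ∈ e), ∀ z ∈ e.erase u, w z = w u) ∧
      ρ = (deg E u : ℝ) + b' u := by
  classical
  have hy : ∀ v, 0 < y v := fun v => by rw [hyw v]; exact mul_pos (hb v) (hw v)
  obtain ⟨vm, e₀, he₀E, hue₀, hvme₀, hvmne, hnb, h1, h2, hprodge⟩ :=
    atmin hk hunif hb hw hyw heig hSig hb'pos hdeg hu
  have hρu : (deg E u : ℝ) < ρ := rho_gt_deg (hdeg u) hy (heig u)
  have hρv : (deg E vm : ℝ) < ρ := rho_gt_deg (hdeg vm) hy (heig vm)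
  have hBnn : (0:ℝ) ≤ b' u * b' vm := le_of_lt (mul_pos (hb'pos u) (hb'pos vm))
  have hGle : Groot (deg E u : ℝ) (deg E vm : ℝ) (b' u * b' vm) ≤ ρ :=
    Groot_le hBnn (le_of_lt hρu) (le_of_lt hρv) hprodge
  have hG := hinf u vm e₀ he₀E hue₀ hvme₀ (Ne.symm hvmne)
  have hGeq : ρ = Groot (deg E u : ℝ) (deg E vm : ℝ) (b' u * b' vm) :=
    le_antisymm hG hGle
  have hprodeq : (ρ - (deg E u : ℝ)) * (ρ - (deg E vm : ℝ)) = b' u * b' vm := by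
    obtain ⟨_, _, h3⟩ := Groot_facts (D1 := (deg E u : ℝ)) (D2 := (deg E vm : ℝ)) hBnn
    rw [hGeq]
    exact h3
  have hab : (b' u * w vm ^ (k-1)) * (b' vm * w u ^ (k-1))
      = ((ρ - (deg E u : ℝ)) * w u ^ (k-1)) * ((ρ - (deg E vm : ℝ)) * w vm ^ (k-1)) := by
    linear_combination (-(w u ^ (k-1) * w vm ^ (k-1))) * hprodeq
  obtain ⟨hA, hB⟩ := eq_of_mul_eq_of_ge h1 h2 hab.symm
    (mul_pos (hb'pos u) (pow_pos (hw vm) _))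
    (mul_pos (hb'pos vm) (pow_pos (hw u) _))
  have hforceu : ∀ e ∈ E.filter (fun e => u ∈ e), ∀ z ∈ e.erase u, w z = w vm :=
    rowLB_forcing hunif hb hw hyw (heig u) (hSig u) (hw vm) hnb hA
  have hforcev : ∀ e ∈ E.filter (fun e => vm ∈ e), ∀ z ∈ e.erase vm, w z = w u :=
    rowLB_forcing hunif hb hw hyw (heig vm) (hSig vm) (hw u)
      (fun e _ z _ => hu z) hB
  have hcard : 1 < (e₀.erase vm).card := by
    rw [Finset.card_erase_of_mem hvme₀, hunif e₀ he₀E]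
    omega
  obtain ⟨z₀, hz₀, hz₀u⟩ := Finset.exists_mem_ne hcard u
  have hz₀vm : z₀ ∈ e₀.erase u :=
    Finset.mem_erase.mpr ⟨hz₀u, Finset.mem_of_mem_erase hz₀⟩
  have hwz₀1 : w z₀ = w u :=
    hforcev e₀ (Finset.mem_filter.mpr ⟨he₀E, hvme₀⟩) z₀ hz₀
  have hwz₀2 : w z₀ = w vm :=
    hforceu e₀ (Finset.mem_filter.mpr ⟨he₀E, hue₀⟩) z₀ hz₀vm
  have hvmu : w vm = w u := by rw [← hwz₀2, hwz₀1]
  constructor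
  · intro e he z hz
    rw [hforceu e he z hz, hvmu]
  · have hA' : (ρ - (deg E u : ℝ)) * w u ^ (k-1) = b' u * w u ^ (k-1) := by
      rw [hA, hvmu]
    have := mul_right_cancel₀ (ne_of_gt (pow_pos (hw u) (k-1))) hA'
    linarith

end Stmt15Aux

namespace Stmt15Aux

open Finset

variable {n k : ℕ} {E : Finset (Finset (Fin n))}

lemma propagate (hconn : HConnected E) {w : Fin n → ℝ} {c : ℝ}
    (hstep : ∀ u, w u = c → ∀ e ∈ E.filter (fun e => u ∈ e), ∀ z ∈ e.erase u, w z = c)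
    {i₀ : Fin n} (hi₀ : w i₀ = c) : ∀ v, w v = c := by
  intro v
  have h := hconn i₀ v
  induction h with
  | refl => exact hi₀
  | tail _ hrel ih =>
      obtain ⟨e, he, hbe, hce⟩ := hrel
      rename_i b' c' _
      by_cases hbc : c' = b'
      · rw [hbc]; exact ih
      · exact hstep b' ih e (Finset.mem_filter.mpr ⟨he, hbe⟩) c'
          (Finset.mem_erase.mpr ⟨hbc, hce⟩)

end Stmt15Aux

open Stmt15Aux

theorem stmt15 {n k : ℕ} (hn : 0 < n) (hk : 3 ≤ k)
    (E : Finset (Finset (Fin n))) (hunif : ∀ e ∈ E, e.card = k)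
    (hconn : HConnected E)
    (b : Fin n → ℝ) (hb : ∀ i, 0 < b i)
    (b' : Fin n → ℝ)
    (hb' : ∀ i, b' i =
      (b i ^ (k-1))⁻¹ * ∑ e ∈ E.filter (fun e => i ∈ e), ∏ v ∈ e.erase i, b v)
    (g : Fin n → Fin n → ℝ)
    (hg : ∀ i j, g i j =
      ((deg E i : ℝ) + (deg E j : ℝ) +
        Real.sqrt (((deg E i : ℝ) - (deg E j : ℝ)) ^ 2 + 4 * b' i * b' j)) / 2)
    (P : Set ℝ)
    (hP : P = {r : ℝ | ∃ e ∈ E, ∃ i ∈ e, ∃ j ∈ e, i ≠ j ∧ r = g i j}) :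
    sInf P ≤ specRad (signlessT E k) ∧ specRad (signlessT E k) ≤ sSup P ∧
      ((specRad (signlessT E k) = sInf P ∨ specRad (signlessT E k) = sSup P) ↔
        ∀ i j : Fin n, (deg E i : ℝ) + b' i = (deg E j : ℝ) + b' j) := by
  classical
  by_cases hn2 : 2 ≤ n
  · -- main case
    have hdeg : ∀ i, 0 < deg E i := hdeg_of_conn hconn hn2
    obtain ⟨y, hy, heig, hρ1, hub⟩ := specRad_eq hk hunif hconn hn hdeg b hb
    set ρ := specRad (signlessT E k) with hρdef
    have hSig : ∀ i, ∑ e ∈ E.filter (fun e => i ∈ e), ∏ v ∈ e.erase i, b v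
        = b' i * b i ^ (k-1) := by
      intro i
      rw [hb' i]
      have hbne : b i ^ (k-1) ≠ 0 := ne_of_gt (pow_pos (hb i) _)
      field_simp
    have hb'pos : ∀ i, 0 < b' i := by
      intro i
      rw [hb' i]
      refine mul_pos (inv_pos.mpr (pow_pos (hb i) _)) ?_
      exact Finset.sum_pos (fun e _ => Finset.prod_pos (fun v _ => hb v))
        (Finset.card_pos.mp (hdeg i))
    set w : Fin n → ℝ := fun v => y v / b v with hwdef
    have hw : ∀ v, 0 < w v := fun v => div_pos (hy v) (hb v)
    have hyw : ∀ v, y v = b v * w v := by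
      intro v
      rw [hwdef]
      have := ne_of_gt (hb v)
      field_simp
    have hgG : ∀ i j, g i j = Groot (deg E i : ℝ) (deg E j : ℝ) (b' i * b' j) := by
      intro i j
      rw [hg i j]
      unfold Groot
      rw [show ((deg E i : ℝ) - (deg E j : ℝ))^2 + 4 * b' i * b' j
        = ((deg E i : ℝ) - (deg E j : ℝ))^2 + 4 * (b' i * b' j) by ring]
    have hmemP : ∀ (i j : Fin n) (e : Finset (Fin n)), e ∈ E → i ∈ e → j ∈ e →
        i ≠ j → g i j ∈ P := by
      intro i j e he hie hje hne
      rw [hP]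
      exact ⟨e, he, i, hie, j, hje, hne, rfl⟩
    have hPfin : P.Finite := by
      refine Set.Finite.subset (Set.finite_range
        (fun p : Fin n × Fin n => g p.1 p.2)) ?_
      rw [hP]
      rintro r ⟨e, _, i, _, j, _, _, rfl⟩
      exact ⟨(i, j), rfl⟩
    have hPne : P.Nonempty := by
      obtain ⟨e, he⟩ := Finset.card_pos.mp (hdeg ⟨0, hn⟩)
      obtain ⟨heE, h0e⟩ := Finset.mem_filter.mp he
      have hcard : 1 < e.card := by rw [hunif e heE]; omega
      obtain ⟨j, hje, hjne⟩ := Finset.exists_mem_ne hcard ⟨0, hn⟩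
      exact ⟨g ⟨0, hn⟩ j, hmemP _ _ e heE h0e hje (Ne.symm hjne)⟩
    have hρd : ∀ i, (deg E i : ℝ) < ρ :=
      fun i => rho_gt_deg (hdeg i) hy (heig i)
    -- upper bound
    have hupper : ρ ≤ sSup P := by
      obtain ⟨imax, _, himax⟩ := Finset.exists_max_image Finset.univ w
        ⟨⟨0, hn⟩, Finset.mem_univ _⟩
      obtain ⟨vm, e₀, he₀E, hue₀, hvme₀, hvmne, _, _, _, hprodle⟩ :=
        atmax hk hunif hb hw hyw heig hSig hb'pos hdeg
          (fun v => himax v (Finset.mem_univ v))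
      have h1 : ρ ≤ Groot (deg E imax : ℝ) (deg E vm : ℝ) (b' imax * b' vm) :=
        le_Groot (le_of_lt (mul_pos (hb'pos imax) (hb'pos vm)))
          (le_of_lt (hρd imax)) (le_of_lt (hρd vm)) hprodle
      rw [← hgG] at h1
      exact le_trans h1 (le_csSup hPfin.bddAbove
        (hmemP imax vm e₀ he₀E hue₀ hvme₀ (Ne.symm hvmne)))
    -- lower bound
    have hlower : sInf P ≤ ρ := by
      obtain ⟨imin, _, himin⟩ := Finset.exists_min_image Finset.univ w
        ⟨⟨0, hn⟩, Finset.mem_univ _⟩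
      obtain ⟨vm, e₀, he₀E, hue₀, hvme₀, hvmne, _, _, _, hprodge⟩ :=
        atmin hk hunif hb hw hyw heig hSig hb'pos hdeg
          (fun v => himin v (Finset.mem_univ v))
      have h1 : Groot (deg E imin : ℝ) (deg E vm : ℝ) (b' imin * b' vm) ≤ ρ :=
        Groot_le (le_of_lt (mul_pos (hb'pos imin) (hb'pos vm)))
          (le_of_lt (hρd imin)) (le_of_lt (hρd vm)) hprodge
      rw [← hgG] at h1
      exact le_trans (csInf_le hPfin.bddBelow
        (hmemP imin vm e₀ he₀E hue₀ hvme₀ (Ne.symm hvmne))) h1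
    refine ⟨hlower, hupper, ?_, ?_⟩
    · -- equality implies constancy
      rintro (hcase | hcase)
      · -- ρ = sInf P
        have hinf : ∀ i j : Fin n, ∀ e ∈ E, i ∈ e → j ∈ e → i ≠ j →
            ρ ≤ Groot (deg E i : ℝ) (deg E j : ℝ) (b' i * b' j) := by
          intro i j e he hie hje hne
          rw [← hgG]
          rw [hcase]
          exact csInf_le hPfin.bddBelow (hmemP i j e he hie hje hne)
        obtain ⟨imin, _, himin⟩ := Finset.exists_min_image Finset.univ w
          ⟨⟨0, hn⟩, Finset.mem_univ _⟩
        have himin' : ∀ v, w imin ≤ w v := fun v => himin v (Finset.mem_univ v)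
        have hconst : ∀ v, w v = w imin := by
          refine propagate hconn ?_ rfl
          intro u hwu e he z hz
          have hu' : ∀ v, w u ≤ w v := fun v => by rw [hwu]; exact himin' v
          have := (eqmin_at hk hunif hb hw hyw heig hSig hb'pos hdeg hinf hu').1
            e he z hz
          rw [this, hwu]
        intro i j
        have hui : ∀ v, w i ≤ w v := fun v => by rw [hconst i, ← hconst v]
        have huj : ∀ v, w j ≤ w v := fun v => by rw [hconst j, ← hconst v]
        have h1 := (eqmin_at hk hunif hb hw hyw heig hSig hb'pos hdeg hinf hui).2
        have h2 := (eqmin_at hk hunif hb hw hyw heig hSig hb'pos hdeg hinf huj).2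
        rw [← h1, ← h2]
      · -- ρ = sSup P
        have hsup : ∀ i j : Fin n, ∀ e ∈ E, i ∈ e → j ∈ e → i ≠ j →
            Groot (deg E i : ℝ) (deg E j : ℝ) (b' i * b' j) ≤ ρ := by
          intro i j e he hie hje hne
          rw [← hgG, hcase]
          exact le_csSup hPfin.bddAbove (hmemP i j e he hie hje hne)
        obtain ⟨imax, _, himax⟩ := Finset.exists_max_image Finset.univ w
          ⟨⟨0, hn⟩, Finset.mem_univ _⟩
        have himax' : ∀ v, w v ≤ w imax := fun v => himax v (Finset.mem_univ v)
        have hconst : ∀ v, w v = w imax := by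
          refine propagate hconn ?_ rfl
          intro u hwu e he z hz
          have hu' : ∀ v, w v ≤ w u := fun v => by rw [hwu]; exact himax' v
          have := (eqmax_at hk hunif hb hw hyw heig hSig hb'pos hdeg hsup hu').1
            e he z hz
          rw [this, hwu]
        intro i j
        have hui : ∀ v, w v ≤ w i := fun v => by rw [hconst i, ← hconst v]
        have huj : ∀ v, w v ≤ w j := fun v => by rw [hconst j, ← hconst v]
        have h1 := (eqmax_at hk hunif hb hw hyw heig hSig hb'pos hdeg hsup hui).2
        have h2 := (eqmax_at hk hunif hb hw hyw heig hSig hb'pos hdeg hsup huj).2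
        rw [← h1, ← h2]
    · -- constancy implies equality
      intro hconst
      set c : ℝ := (deg E ⟨0, hn⟩ : ℝ) + b' ⟨0, hn⟩ with hcdef
      have hallc : ∀ i, (deg E i : ℝ) + b' i = c := fun i => hconst i ⟨0, hn⟩
      have hPc : ∀ r ∈ P, r = c := by
        intro r hr
        rw [hP] at hr
        obtain ⟨e, _, i, _, j, _, _, rfl⟩ := hr
        rw [hgG i j]
        exact Groot_const (hallc i) (hallc j) (le_of_lt (hb'pos i))
          (le_of_lt (hb'pos j))
      have hcP : c ∈ P := by
        obtain ⟨r, hr⟩ := hPne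
        have := hPc r hr
        rw [← this]
        exact hr
      have hsupc : sSup P = c :=
        le_antisymm (csSup_le hPne (fun r hr => le_of_eq (hPc r hr)))
          (le_csSup hPfin.bddAbove hcP)
      have hinfc : sInf P = c :=
        le_antisymm (csInf_le hPfin.bddBelow hcP)
          (le_csInf hPne (fun r hr => ge_of_eq (hPc r hr)))
      left
      rw [hinfc]
      refine le_antisymm ?_ ?_
      · rw [← hsupc]; exact hupper
      · rw [← hinfc]; exact hlower
  · -- n = 1
    have hn1 : n = 1 := by omega
    subst hn1
    have hE : E = ∅ := by
      rw [Finset.eq_empty_iff_forall_notMem]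
      intro e he
      have h1 := hunif e he
      have h2 : e.card ≤ 1 := by
        calc e.card ≤ (Finset.univ : Finset (Fin 1)).card := Finset.card_le_univ e
          _ = 1 := by simp
      omega
    subst hE
    have hPempty : P = ∅ := by
      rw [hP]
      ext r
      simp
    have heig0 : IsEigenvalue (signlessT (∅ : Finset (Finset (Fin 1))) k) 0 := by
      refine ⟨fun _ => 1, ?_, ?_⟩
      · intro h
        have h1 := congrFun h 0
        simp at h1
      · intro i
        unfold tApply signlessT adjT deg
        simp
    have hS : {r : ℝ | ∃ lam : ℂ,
        IsEigenvalue (signlessT (∅ : Finset (Finset (Fin 1))) k) lam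
          ∧ r = ‖lam‖} = {0} := by
      ext r
      simp only [Set.mem_setOf_eq, Set.mem_singleton_iff]
      constructor
      · rintro ⟨lam, ⟨x, hx0, hxeq⟩, rfl⟩
        have hx : x 0 ≠ 0 := by
          intro h0
          apply hx0
          funext i
          have hi : i = 0 := Subsingleton.elim i 0
          rw [hi]
          exact h0
        have h2 : tApply (signlessT (∅ : Finset (Finset (Fin 1))) k) x 0 = 0 := by
          unfold tApply signlessT adjT deg
          simp
        have h1 := hxeq 0
        rw [h2] at h1
        have h3 : lam = 0 := by
          rcases mul_eq_zero.mp h1.symm with h | h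
          · exact h
          · exact absurd ((pow_eq_zero_iff (by omega)).mp h) hx
        rw [h3]
        simp
      · intro hr
        rw [hr]
        exact ⟨0, heig0, by simp⟩
    have hspec : specRad (signlessT (∅ : Finset (Finset (Fin 1))) k) = 0 := by
      unfold specRad
      rw [hS, csSup_singleton]
    rw [hspec, hPempty, Real.sInf_empty, Real.sSup_empty]
    refine ⟨le_refl 0, le_refl 0, ?_, ?_⟩
    · intro _ i j
      have : i = j := Subsingleton.elim i j
      rw [this]
    · intro _
      left
      rfl
end

section
/- Let k ≥ 3 and H be a connected k-uniform hypergraph with degrees d_i. Then min over edges e and pairs {i,j} ⊆ e of (d_i + d_j) ≤ ρ(Q(H)) ≤ max over edges e and pairs {i,j} ⊆ e of (d_i + d_j), with equality on either side if and only if H is regular. -/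
open scoped BigOperators

open TensorSR

open HypSR

open Finset


lemma tupleSumAux {n p : ℕ} (s : Finset (Fin n)) (hs : s.card = p) (x : Fin n → ℂ) :
    ∑ t ∈ Finset.univ.filter (fun t : Fin p → Fin n => Finset.image t Finset.univ = s),
      ∏ j, x (t j) = (p.factorial : ℂ) * ∏ v ∈ s, x v := by
  classical
  have hcards : Fintype.card {v // v ∈ s} = p := by simp [Fintype.card_coe, hs]
  have hterm : ∀ t ∈ Finset.univ.filter
      (fun t : Fin p → Fin n => Finset.image t Finset.univ = s),
      (∏ j, x (t j)) = ∏ v ∈ s, x v := by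
    intro t ht
    simp only [mem_filter, mem_univ, true_and] at ht
    have hinjOn : ∀ a ∈ (univ : Finset (Fin p)), ∀ b ∈ univ, t a = t b → a = b := by
      have hcard : (Finset.image t Finset.univ).card = (univ : Finset (Fin p)).card := by
        rw [ht, hs, card_univ, Fintype.card_fin]
      have := Finset.injOn_of_card_image_eq hcard
      intro a _ b _ hab
      exact this (by simp) (by simp) hab
    rw [← ht, Finset.prod_image hinjOn]
  rw [Finset.sum_congr rfl hterm, Finset.sum_const]
  have hset : Finset.univ.filter (fun t : Fin p → Fin n => Finset.image t Finset.univ = s)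
      = Finset.image (fun e : Fin p ≃ {v // v ∈ s} => (fun j => ((e j : Fin n))))
          Finset.univ := by
    ext t
    simp only [mem_filter, mem_univ, true_and, mem_image]
    constructor
    · intro ht
      have hmem : ∀ j, t j ∈ s := by
        intro j; rw [← ht]; exact Finset.mem_image_of_mem _ (mem_univ j)
      set f : Fin p → {v // v ∈ s} := fun j => ⟨t j, hmem j⟩ with hf
      have hinj : Function.Injective f := by
        have hcard : (Finset.image t Finset.univ).card = (univ : Finset (Fin p)).card := by
          rw [ht, hs, card_univ, Fintype.card_fin]
        have h2 := Finset.injOn_of_card_image_eq hcard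
        intro a b hab
        exact h2 (by simp) (by simp) (by simpa [hf, Subtype.ext_iff] using hab)
      have hbij : Function.Bijective f := by
        rw [Fintype.bijective_iff_injective_and_card, hcards]
        exact ⟨hinj, by simp⟩
      exact ⟨Equiv.ofBijective f hbij, rfl⟩
    · rintro ⟨e, rfl⟩
      ext v
      simp only [Finset.mem_image, mem_univ, true_and]
      constructor
      · rintro ⟨j, rfl⟩; exact (e j).2
      · intro hv; exact ⟨e.symm ⟨v, hv⟩, by simp⟩
  rw [hset, Finset.card_image_of_injective _ ?_, card_univ, Fintype.card_equiv ?_]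
  · simp [Fintype.card_fin, nsmul_eq_mul]
  · exact (Fintype.equivFinOfCardEq hcards).symm
  · intro e1 e2 h
    ext j
    have := congr_fun h j
    exact congrArg Fin.val this


lemma tApply_signless {n k : ℕ} (hk : 3 ≤ k) (E : Finset (Finset (Fin n)))
    (hunif : ∀ e ∈ E, e.card = k) (x : Fin n → ℂ) (i : Fin n) :
    tApply (signlessT E k) x i
      = (deg E i : ℂ) * x i ^ (k-1)
        + ∑ e ∈ E.filter (fun e => i ∈ e), ∏ v ∈ e.erase i, x v := by
  classical
  have hk1 : 1 ≤ k - 1 := by omega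
  unfold tApply signlessT
  have hsplit : ∀ t : Fin (k-1) → Fin n,
      ((adjT E k i t + if (∀ q, t q = i) then (deg E i : ℝ) else 0 : ℝ) : ℂ) * ∏ j, x (t j)
      = (adjT E k i t : ℂ) * ∏ j, x (t j)
        + ((if (∀ q, t q = i) then (deg E i : ℝ) else 0 : ℝ) : ℂ) * ∏ j, x (t j) := by
    intro t; push_cast; ring
  rw [Finset.sum_congr rfl (fun t _ => hsplit t), Finset.sum_add_distrib]
  have hdiag : ∑ t : Fin (k-1) → Fin n,
      ((if (∀ q, t q = i) then (deg E i : ℝ) else 0 : ℝ) : ℂ) * ∏ j, x (t j)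
      = (deg E i : ℂ) * x i ^ (k-1) := by
    rw [Finset.sum_eq_single (fun _ : Fin (k-1) => i)]
    · simp [Finset.prod_const]
    · intro t _ ht
      have : ¬ (∀ q, t q = i) := by
        intro h; exact ht (funext h)
      simp [this]
    · intro h; exact absurd (Finset.mem_univ _) h
  have hadj : ∑ t : Fin (k-1) → Fin n, (adjT E k i t : ℂ) * ∏ j, x (t j)
      = ∑ e ∈ E.filter (fun e => i ∈ e), ∏ v ∈ e.erase i, x v := by
    unfold adjT
    have h1 : ∀ t : Fin (k-1) → Fin n,
        (((if insert i (Finset.image t Finset.univ) ∈ E then ((k-1).factorial : ℝ)⁻¹ else 0 : ℝ)) : ℂ)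
          * ∏ j, x (t j)
        = if insert i (Finset.image t Finset.univ) ∈ E
            then ((k-1).factorial : ℂ)⁻¹ * ∏ j, x (t j) else 0 := by
      intro t; split <;> simp
    rw [Finset.sum_congr rfl (fun t _ => h1 t), ← Finset.sum_filter, ← Finset.mul_sum]
    have hmaps : ∀ t ∈ Finset.univ.filter
        (fun t : Fin (k-1) → Fin n => insert i (Finset.image t Finset.univ) ∈ E),
        insert i (Finset.image t Finset.univ) ∈ E.filter (fun e => i ∈ e) := by
      intro t ht
      simp only [mem_filter, mem_univ, true_and] at ht ⊢
      exact ⟨ht, Finset.mem_insert_self _ _⟩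
    rw [← Finset.sum_fiberwise_of_maps_to hmaps (fun t => ∏ j, x (t j))]
    have hfiber : ∀ e ∈ E.filter (fun e => i ∈ e),
        (Finset.univ.filter
          (fun t : Fin (k-1) → Fin n => insert i (Finset.image t Finset.univ) ∈ E)).filter
            (fun t => insert i (Finset.image t Finset.univ) = e)
        = Finset.univ.filter (fun t : Fin (k-1) → Fin n => Finset.image t Finset.univ = e.erase i) := by
      intro e he
      simp only [mem_filter] at he
      have hie : i ∈ e := he.2
      have hcarde : e.card = k := hunif e he.1
      ext t
      simp only [mem_filter, mem_univ, true_and]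
      constructor
      · rintro ⟨_, rfl⟩
        have hsub : (insert i (Finset.image t Finset.univ)).erase i ⊆ Finset.image t Finset.univ := by
          intro v hv
          rcases Finset.mem_erase.mp hv with ⟨hvi, hv2⟩
          rcases Finset.mem_insert.mp hv2 with h | h
          · exact absurd h hvi
          · exact h
        have hcard1 : ((insert i (Finset.image t Finset.univ)).erase i).card = k - 1 := by
          rw [Finset.card_erase_of_mem (Finset.mem_insert_self _ _), hcarde]
        have hcard2 : (Finset.image t Finset.univ).card ≤ k - 1 := by
          calc (Finset.image t Finset.univ).card ≤ (Finset.univ : Finset (Fin (k-1))).card :=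
                Finset.card_image_le
            _ = k - 1 := by simp
        exact (Finset.eq_of_subset_of_card_le hsub (by omega)).symm
      · intro ht
        have : insert i (Finset.image t Finset.univ) = e := by
          rw [ht, Finset.insert_erase hie]
        exact ⟨this ▸ he.1, this⟩
    rw [Finset.sum_congr rfl (fun e he => by
      rw [hfiber e he, tupleSumAux (e.erase i) (by rw [Finset.card_erase_of_mem
        (Finset.mem_filter.mp he).2, hunif e (Finset.mem_filter.mp he).1]) x])]
    rw [Finset.mul_sum]
    apply Finset.sum_congr rfl
    intro e he
    rw [← mul_assoc, inv_mul_cancel₀ (by exact_mod_cast Nat.factorial_ne_zero _), one_mul]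
  rw [hdiag, hadj, add_comm]

noncomputable def Wr {n : ℕ} (E : Finset (Finset (Fin n))) (k : ℕ) (y : Fin n → ℝ) (i : Fin n) : ℝ :=
  (deg E i : ℝ) * y i ^ (k-1) + ∑ e ∈ E.filter (fun e => i ∈ e), ∏ v ∈ e.erase i, y v

lemma tApply_real {n k : ℕ} (hk : 3 ≤ k) (E : Finset (Finset (Fin n)))
    (hunif : ∀ e ∈ E, e.card = k) (y : Fin n → ℝ) (i : Fin n) :
    tApply (signlessT E k) (fun j => (y j : ℂ)) i = ((Wr E k y i : ℝ) : ℂ) := by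
  rw [tApply_signless hk E hunif _ i]
  unfold Wr
  push_cast
  rfl

lemma isEig_of_Wr {n k : ℕ} (hk : 3 ≤ k) (E : Finset (Finset (Fin n)))
    (hunif : ∀ e ∈ E, e.card = k) (y : Fin n → ℝ) (hy : y ≠ 0) (lam : ℝ)
    (h : ∀ i, Wr E k y i = lam * y i ^ (k-1)) :
    IsEigenvalue (signlessT E k) (lam : ℂ) := by
  refine ⟨fun j => (y j : ℂ), ?_, ?_⟩
  · intro hx
    apply hy
    funext j
    have := congr_fun hx j
    simpa using this
  · intro i
    rw [tApply_real hk E hunif y i, h i]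
    push_cast
    ring

lemma Wr_nonneg_mono {n k : ℕ} (E : Finset (Finset (Fin n))) (a b : Fin n → ℝ)
    (ha : ∀ i, 0 ≤ a i) (hab : ∀ i, a i ≤ b i) (i : Fin n) :
    Wr E k a i ≤ Wr E k b i := by
  unfold Wr
  apply add_le_add
  · apply mul_le_mul_of_nonneg_left _ (Nat.cast_nonneg _)
    exact pow_le_pow_left₀ (ha i) (hab i) _
  · apply Finset.sum_le_sum
    intro e _
    exact Finset.prod_le_prod (fun v _ => ha v) (fun v _ => hab v)

lemma Wr_smul {n k : ℕ} (E : Finset (Finset (Fin n))) (hunif : ∀ e ∈ E, e.card = k)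
    (s : ℝ) (z : Fin n → ℝ) (i : Fin n) :
    Wr E k (fun v => s * z v) i = s ^ (k-1) * Wr E k z i := by
  unfold Wr
  rw [mul_add]
  congr 1
  · ring
  · rw [Finset.mul_sum]
    apply Finset.sum_congr rfl
    intro e he
    rw [Finset.prod_mul_distrib, Finset.prod_const,
      Finset.card_erase_of_mem (Finset.mem_filter.mp he).2,
      hunif e (Finset.mem_filter.mp he).1]


lemma abs_le_of_Wr {n k : ℕ} (hk : 3 ≤ k) (E : Finset (Finset (Fin n)))
    (hunif : ∀ e ∈ E, e.card = k) (z : Fin n → ℝ) (hz : ∀ i, 0 < z i) (M : ℝ)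
    (hM : ∀ i, Wr E k z i ≤ M * z i ^ (k-1)) (μ : ℂ)
    (hμ : IsEigenvalue (signlessT E k) μ) : ‖μ‖ ≤ M := by
  classical
  obtain ⟨x, hx0, heig⟩ := hμ
  set a : Fin n → ℝ := fun i => ‖x i‖ with ha
  have hn : 0 < n := by
    rcases Nat.eq_zero_or_pos n with h | h
    · exfalso; exact hx0 (funext fun j => absurd j.2 (by omega))
    · exact h
  obtain ⟨i0, -, hi0⟩ := Finset.exists_max_image Finset.univ (fun i => a i / z i)
    ⟨⟨0, hn⟩, Finset.mem_univ _⟩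
  set s : ℝ := a i0 / z i0 with hs
  have hann : ∀ i, 0 ≤ a i := fun i => norm_nonneg _
  have hspos : 0 < s := by
    obtain ⟨j, hj⟩ : ∃ j, x j ≠ 0 := by
      by_contra h
      push_neg at h
      exact hx0 (funext h)
    have haj : 0 < a j := by simpa [ha] using (norm_pos_iff.mpr hj)
    have h1 := hi0 j (Finset.mem_univ j)
    have hj2 : 0 < a j / z j := div_pos haj (hz j)
    exact lt_of_lt_of_le hj2 h1
  have hptw : ∀ i, a i ≤ s * z i := by
    intro i
    have := (div_le_iff₀ (hz i)).mp (hi0 i (Finset.mem_univ i))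
    linarith [this]
  have hai0 : a i0 = s * z i0 := by
    rw [hs, div_mul_cancel₀ _ (ne_of_gt (hz i0))]
  have hM0 : 0 ≤ M := by
    have h1 : 0 ≤ Wr E k z i0 := by
      unfold Wr
      apply add_nonneg
      · exact mul_nonneg (Nat.cast_nonneg _) (le_of_lt (pow_pos (hz i0) _))
      · apply Finset.sum_nonneg
        intro e _
        exact Finset.prod_nonneg (fun v _ => le_of_lt (hz v))
    have h2 := hM i0
    nlinarith [pow_pos (hz i0) (k-1)]
  -- key inequality at i0
  have hkey : ‖μ‖ * a i0 ^ (k-1) ≤ M * a i0 ^ (k-1) := by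
    have h1 : ‖tApply (signlessT E k) x i0‖ = ‖μ‖ * a i0 ^ (k-1) := by
      rw [heig i0, norm_mul, norm_pow]
    have h2 : ‖tApply (signlessT E k) x i0‖ ≤ Wr E k a i0 := by
      rw [tApply_signless hk E hunif x i0]
      unfold Wr
      refine le_trans (norm_add_le _ _) ?_
      gcongr
      · rw [norm_mul, norm_pow]
        simp [ha]
      · refine le_trans (norm_sum_le _ _) ?_
        apply Finset.sum_le_sum
        intro e _
        rw [norm_prod]
    have h3 : Wr E k a i0 ≤ s ^ (k-1) * Wr E k z i0 := by
      rw [← Wr_smul E hunif s z i0]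
      exact Wr_nonneg_mono E a _ hann hptw i0
    have h4 : s ^ (k-1) * Wr E k z i0 ≤ M * a i0 ^ (k-1) := by
      calc s ^ (k-1) * Wr E k z i0 ≤ s ^ (k-1) * (M * z i0 ^ (k-1)) := by
            apply mul_le_mul_of_nonneg_left (hM i0) (by positivity)
        _ = M * a i0 ^ (k-1) := by rw [hai0, mul_pow]; ring
    calc ‖μ‖ * a i0 ^ (k-1) = ‖tApply (signlessT E k) x i0‖ := h1.symm
      _ ≤ Wr E k a i0 := h2
      _ ≤ s ^ (k-1) * Wr E k z i0 := h3
      _ ≤ M * a i0 ^ (k-1) := h4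
  have hpow : 0 < a i0 ^ (k-1) := by
    have : 0 < a i0 := by rw [hai0]; exact mul_pos hspos (hz i0)
    positivity
  exact le_of_mul_le_mul_right hkey hpow

lemma specRad_eq_of {n p : ℕ} (A : Fin n → (Fin p → Fin n) → ℝ) (lam : ℝ) (hlam : 0 ≤ lam)
    (hev : IsEigenvalue A (lam : ℂ))
    (hub : ∀ μ : ℂ, IsEigenvalue A μ → ‖μ‖ ≤ lam) : specRad A = lam := by
  unfold specRad
  apply le_antisymm
  · apply Real.sSup_le _ hlam
    rintro r ⟨μ, hμ, rfl⟩
    exact hub μ hμ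
  · apply le_csSup
    · refine ⟨lam, ?_⟩
      rintro r ⟨μ, hμ, rfl⟩
      exact hub μ hμ
    · exact ⟨(lam : ℂ), hev, by rw [Complex.norm_real, Real.norm_eq_abs, abs_of_nonneg hlam]⟩

noncomputable def FF {n : ℕ} (E : Finset (Finset (Fin n))) (k : ℕ) (y : Fin n → ℝ) : ℝ :=
  (∑ i, (deg E i : ℝ) * y i ^ k) + k * ∑ e ∈ E, ∏ v ∈ e, y v

noncomputable def NN {n : ℕ} (k : ℕ) (y : Fin n → ℝ) : ℝ := ∑ i, y i ^ k

lemma FF_update {n k : ℕ} (E : Finset (Finset (Fin n))) (y : Fin n → ℝ) (i : Fin n) (u : ℝ) :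
    FF E k (Function.update y i u)
      = ((∑ j ∈ Finset.univ.erase i, (deg E j : ℝ) * y j ^ k)
          + k * ∑ e ∈ E.filter (fun e => i ∉ e), ∏ v ∈ e, y v)
        + (k * ∑ e ∈ E.filter (fun e => i ∈ e), ∏ v ∈ e.erase i, y v) * u
        + (deg E i : ℝ) * u ^ k := by
  classical
  unfold FF
  have h1 : ∑ j, (deg E j : ℝ) * (Function.update y i u j) ^ k
      = (deg E i : ℝ) * u ^ k + ∑ j ∈ Finset.univ.erase i, (deg E j : ℝ) * y j ^ k := by
    rw [← Finset.add_sum_erase _ _ (Finset.mem_univ i)]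
    simp only [Function.update_self]
    congr 1
    apply Finset.sum_congr rfl
    intro j hj
    rw [Function.update_of_ne (Finset.mem_erase.mp hj).1]
  have h2 : ∑ e ∈ E, ∏ v ∈ e, Function.update y i u v
      = (∑ e ∈ E.filter (fun e => i ∈ e), ∏ v ∈ e.erase i, y v) * u
        + ∑ e ∈ E.filter (fun e => i ∉ e), ∏ v ∈ e, y v := by
    rw [← Finset.sum_filter_add_sum_filter_not E (fun e => i ∈ e)]
    congr 1
    · rw [Finset.sum_mul]
      apply Finset.sum_congr rfl
      intro e he
      rw [Finset.prod_update_of_mem (Finset.mem_filter.mp he).2]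
      rw [Finset.sdiff_singleton_eq_erase]
      ring
    · apply Finset.sum_congr rfl
      intro e he
      refine Finset.prod_congr rfl ?_
      intro v hv
      have : v ≠ i := by
        rintro rfl
        exact (Finset.mem_filter.mp he).2 hv
      rw [Function.update_of_ne this]
  rw [h1, h2]
  ring

lemma NN_update {n k : ℕ} (y : Fin n → ℝ) (i : Fin n) (u : ℝ) :
    NN k (Function.update y i u) = (∑ j ∈ Finset.univ.erase i, y j ^ k) + u ^ k := by
  classical
  unfold NN
  rw [← Finset.add_sum_erase _ _ (Finset.mem_univ i)]
  simp only [Function.update_self]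
  rw [add_comm]
  congr 1
  apply Finset.sum_congr rfl
  intro j hj
  rw [Function.update_of_ne (Finset.mem_erase.mp hj).1]

lemma FF_smul {n k : ℕ} (E : Finset (Finset (Fin n))) (hunif : ∀ e ∈ E, e.card = k)
    (c : ℝ) (y : Fin n → ℝ) :
    FF E k (fun i => c * y i) = c ^ k * FF E k y := by
  unfold FF
  rw [mul_add, Finset.mul_sum, Finset.mul_sum]
  congr 1
  · apply Finset.sum_congr rfl
    intro j _
    rw [mul_pow]; ring
  · rw [Finset.mul_sum, Finset.mul_sum]
    apply Finset.sum_congr rfl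
    intro e he
    rw [Finset.prod_mul_distrib, Finset.prod_const, hunif e he]
    ring

lemma NN_smul {n k : ℕ} (c : ℝ) (y : Fin n → ℝ) :
    NN k (fun i => c * y i) = c ^ k * NN k y := by
  unfold NN
  rw [Finset.mul_sum]
  apply Finset.sum_congr rfl
  intro j _
  rw [mul_pow]

lemma FF_nonneg {n k : ℕ} (E : Finset (Finset (Fin n))) (y : Fin n → ℝ)
    (hy : ∀ i, 0 ≤ y i) : 0 ≤ FF E k y := by
  unfold FF
  apply add_nonneg
  · exact Finset.sum_nonneg fun i _ => mul_nonneg (Nat.cast_nonneg _) (pow_nonneg (hy i) _)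
  · exact mul_nonneg (Nat.cast_nonneg _)
      (Finset.sum_nonneg fun e _ => Finset.prod_nonneg fun v _ => hy v)

lemma NN_pos_of {n k : ℕ} (y : Fin n → ℝ) (hy : ∀ i, 0 ≤ y i) (hy0 : y ≠ 0) :
    0 < NN k y := by
  obtain ⟨j, hj⟩ : ∃ j, y j ≠ 0 := by
    by_contra h; push_neg at h; exact hy0 (funext h)
  have : 0 < y j := lt_of_le_of_ne (hy j) (Ne.symm hj)
  unfold NN
  apply Finset.sum_pos' (fun i _ => pow_nonneg (hy i) _)
  exact ⟨j, Finset.mem_univ j, pow_pos this _⟩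

lemma exists_maximizer {n k : ℕ} (hn : 0 < n) (hk : 3 ≤ k) (E : Finset (Finset (Fin n))) :
    ∃ y : Fin n → ℝ, (∀ i, 0 ≤ y i) ∧ NN k y = 1 ∧
      ∀ z : Fin n → ℝ, (∀ i, 0 ≤ z i) → NN k z = 1 → FF E k z ≤ FF E k y := by
  classical
  have hk0 : k ≠ 0 := by omega
  have hNNc : Continuous (fun y : Fin n → ℝ => NN k y) := by
    unfold NN
    exact continuous_finset_sum _ (fun i _ => (continuous_apply i).pow k)
  have hFFc : Continuous (fun y : Fin n → ℝ => FF E k y) := by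
    unfold FF
    apply Continuous.add
    · exact continuous_finset_sum _ (fun i _ => continuous_const.mul ((continuous_apply i).pow k))
    · exact continuous_const.mul (continuous_finset_sum _
        (fun e _ => continuous_finset_prod _ (fun v _ => continuous_apply v)))
  set K : Set (Fin n → ℝ) := {y | ∀ i, 0 ≤ y i} ∩ {y | NN k y = 1} with hK
  have hKclosed : IsClosed K := by
    apply IsClosed.inter
    · have : {y : Fin n → ℝ | ∀ i, 0 ≤ y i} = ⋂ i, {y | 0 ≤ y i} := by
        ext y; simp [Set.mem_iInter]
      rw [this]
      exact isClosed_iInter (fun i => isClosed_le continuous_const (continuous_apply i))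
    · exact isClosed_eq hNNc continuous_const
  have hKsub : K ⊆ Metric.closedBall 0 1 := by
    rintro y ⟨hy1, hy2⟩
    rw [mem_closedBall_zero_iff]
    rw [pi_norm_le_iff_of_nonneg (by norm_num)]
    intro i
    rw [Real.norm_eq_abs, abs_of_nonneg (hy1 i)]
    by_contra h
    push_neg at h
    have h1 : (1:ℝ) < y i ^ k := one_lt_pow₀ h (by omega)
    have h2 : y i ^ k ≤ NN k y := by
      unfold NN
      exact Finset.single_le_sum (fun j _ => pow_nonneg (hy1 j) _) (Finset.mem_univ i)
    rw [hy2] at h2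
    linarith
  have hKcompact : IsCompact K :=
    (isCompact_closedBall 0 1).of_isClosed_subset hKclosed hKsub
  have hKne : K.Nonempty := by
    refine ⟨fun i => if i = ⟨0, hn⟩ then 1 else 0, fun i => by positivity, ?_⟩
    show NN k (fun i => if i = ⟨0, hn⟩ then (1:ℝ) else 0) = 1
    unfold NN
    rw [Finset.sum_eq_single ⟨0, hn⟩]
    · simp
    · intro j _ hj; simp [hj, zero_pow hk0]
    · intro h; exact absurd (Finset.mem_univ _) h
  obtain ⟨y, hyK, hmax⟩ := hKcompact.exists_isMaxOn hKne hFFc.continuousOn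
  exact ⟨y, hyK.1, hyK.2, fun z hz1 hz2 => hmax ⟨hz1, hz2⟩⟩

lemma global_cmp {n k : ℕ} (hk : 3 ≤ k) (E : Finset (Finset (Fin n)))
    (hunif : ∀ e ∈ E, e.card = k) (y : Fin n → ℝ)
    (hy : ∀ i, 0 ≤ y i) (hNN : NN k y = 1)
    (hmax : ∀ z : Fin n → ℝ, (∀ i, 0 ≤ z i) → NN k z = 1 → FF E k z ≤ FF E k y) :
    ∀ z : Fin n → ℝ, (∀ i, 0 ≤ z i) → FF E k z ≤ FF E k y * NN k z := by
  intro z hz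
  have hk0 : k ≠ 0 := by omega
  rcases eq_or_ne z 0 with rfl | hz0
  · have h1 : FF E k (0 : Fin n → ℝ) = 0 := by
      unfold FF
      have he : ∀ e ∈ E, ∏ v ∈ e, (0 : Fin n → ℝ) v = 0 := by
        intro e he
        have : e.Nonempty := Finset.card_pos.mp (by rw [hunif e he]; omega)
        obtain ⟨v, hv⟩ := this
        exact Finset.prod_eq_zero hv rfl
      rw [Finset.sum_congr rfl he]
      simp [zero_pow hk0]
    have h2 : NN k (0 : Fin n → ℝ) = 0 := by
      unfold NN; simp [zero_pow hk0]
    rw [h1, h2, mul_zero]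
  · have hNNz : 0 < NN k z := NN_pos_of z hz hz0
    set c : ℝ := (NN k z) ^ (-(1:ℝ)/k) with hc
    have hcpos : 0 < c := Real.rpow_pos_of_pos hNNz _
    have hck : c ^ k = (NN k z)⁻¹ := by
      rw [hc, ← Real.rpow_natCast ((NN k z) ^ (-(1:ℝ)/k)) k, ← Real.rpow_mul (le_of_lt hNNz)]
      rw [show (-(1:ℝ)/k) * (k:ℝ) = -1 by field_simp]
      exact Real.rpow_neg_one _
    have hw1 : ∀ i, 0 ≤ c * z i := fun i => mul_nonneg (le_of_lt hcpos) (hz i)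
    have hw2 : NN k (fun i => c * z i) = 1 := by
      rw [NN_smul, hck, inv_mul_cancel₀ (ne_of_gt hNNz)]
    have h1 := hmax _ hw1 hw2
    rw [FF_smul E hunif, hck] at h1
    have h2 := mul_le_mul_of_nonneg_left h1 (le_of_lt hNNz)
    rw [← mul_assoc, mul_inv_cancel₀ (ne_of_gt hNNz), one_mul] at h2
    linarith

lemma first_order {n k : ℕ} (hk : 3 ≤ k) (E : Finset (Finset (Fin n)))
    (hunif : ∀ e ∈ E, e.card = k) (y : Fin n → ℝ)
    (hy : ∀ i, 0 ≤ y i) (hNN : NN k y = 1)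
    (hcmp : ∀ z : Fin n → ℝ, (∀ i, 0 ≤ z i) → FF E k z ≤ FF E k y * NN k z) :
    ∀ i, Wr E k y i = FF E k y * y i ^ (k-1) := by
  classical
  intro i
  have hk0 : (0:ℝ) < k := by positivity
  have hkk : k - 1 + 1 = k := by omega
  set lam := FF E k y with hlam
  set A : ℝ := (∑ j ∈ Finset.univ.erase i, (deg E j : ℝ) * y j ^ k)
      + k * ∑ e ∈ E.filter (fun e => i ∉ e), ∏ v ∈ e, y v with hA
  set SB : ℝ := ∑ e ∈ E.filter (fun e => i ∈ e), ∏ v ∈ e.erase i, y v with hSB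
  set C : ℝ := ∑ j ∈ Finset.univ.erase i, y j ^ k with hC
  have hSB0 : 0 ≤ SB := Finset.sum_nonneg fun e _ => Finset.prod_nonneg fun v _ => hy v
  have hφle : ∀ u : ℝ, 0 ≤ u →
      (A - lam * C) + (k * SB) * u + ((deg E i : ℝ) - lam) * u ^ k ≤ 0 := by
    intro u hu
    have hz : ∀ j, 0 ≤ Function.update y i u j := by
      intro j
      rcases eq_or_ne j i with rfl | hji
      · rw [Function.update_self]; exact hu
      · rw [Function.update_of_ne hji]; exact hy j
    have h1 := hcmp (Function.update y i u) hz
    rw [FF_update, NN_update (k := k)] at h1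
    rw [← hA, ← hSB, ← hC] at h1
    nlinarith [h1]
  have hupdself : Function.update y i (y i) = y := Function.update_eq_self i y
  have hNN' : C + y i ^ k = 1 := by
    have h9 := NN_update (k := k) y i (y i)
    rw [hupdself, hNN, ← hC] at h9
    linarith [h9]
  have hFF' : A + (k * SB) * y i + (deg E i : ℝ) * y i ^ k = lam := by
    have h9 := FF_update (k := k) E y i (y i)
    rw [hupdself, ← hA, ← hSB, ← hlam] at h9
    linarith [h9]
  have hφ0 : (A - lam * C) + (k * SB) * y i + ((deg E i : ℝ) - lam) * y i ^ k = 0 := by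
    have hCeq : C = 1 - y i ^ k := by linarith [hNN']
    rw [hCeq]
    linear_combination hFF'
  have hWr : Wr E k y i = (deg E i : ℝ) * y i ^ (k-1) + SB := rfl
  rcases lt_or_eq_of_le (hy i) with hyi | hyi
  · -- interior case
    set φ : ℝ → ℝ := fun u => (A - lam * C) + (k * SB) * u + ((deg E i : ℝ) - lam) * u ^ k
      with hφ
    have hmax : IsMaxOn φ (Set.Ici 0) (y i) := by
      intro u hu
      have h1 : φ u ≤ 0 := hφle u hu
      have h2 : φ (y i) = 0 := hφ0
      simp only [Set.mem_setOf_eq]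
      rw [h2]
      exact h1
    have hloc : IsLocalMax φ (y i) := hmax.isLocalMax (Ici_mem_nhds hyi)
    have hder : HasDerivAt φ ((k * SB) + ((deg E i : ℝ) - lam) * (k * y i ^ (k-1))) (y i) := by
      have h1 : HasDerivAt (fun u : ℝ => (A - lam * C) + (k * SB) * u) (k * SB) (y i) := by
        simpa using ((hasDerivAt_id (y i)).const_mul ((k : ℝ) * SB)).const_add (A - lam * C)
      have h2 : HasDerivAt (fun u : ℝ => ((deg E i : ℝ) - lam) * u ^ k)
          (((deg E i : ℝ) - lam) * (k * y i ^ (k-1))) (y i) :=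
        (hasDerivAt_pow k (y i)).const_mul _
      exact h1.add h2
    have h0 := hloc.deriv_eq_zero
    rw [hder.deriv] at h0
    have hSBeq : SB = (lam - (deg E i : ℝ)) * y i ^ (k-1) := by
      have hkne : (k:ℝ) ≠ 0 := ne_of_gt hk0
      have h1 : (k:ℝ) * (SB + ((deg E i : ℝ) - lam) * y i ^ (k-1)) = 0 := by
        linear_combination h0
      have h2 := mul_eq_zero.mp h1
      rcases h2 with h2 | h2
      · exact absurd h2 hkne
      · linarith [h2]
    rw [hWr, hSBeq]
    ring
  · -- boundary case : y i = 0
    have hyi0 : y i = 0 := hyi.symm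
    have hA0 : A - lam * C = 0 := by
      have h9 := hφ0
      rw [hyi0] at h9
      rw [zero_pow (show k ≠ 0 by omega)] at h9
      linarith [h9]
    set C0 : ℝ := max (lam - (deg E i : ℝ)) 0 with hC0
    have hC0nn : 0 ≤ C0 := le_max_right _ _
    have hBle : ∀ u : ℝ, 0 < u → u ≤ 1 → k * SB ≤ C0 * u := by
      intro u hu hu1
      have h1 := hφle u (le_of_lt hu)
      have h2 : (k * SB) * u ≤ (lam - (deg E i : ℝ)) * u ^ k := by linarith [h1, hA0]
      have h3 : (lam - (deg E i : ℝ)) * u ^ k ≤ C0 * u ^ k :=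
        mul_le_mul_of_nonneg_right (le_max_left _ _) (pow_nonneg (le_of_lt hu) _)
      have h4 : u ^ k = u ^ (k-1) * u := by rw [← pow_succ, hkk]
      have h5 : (k * SB) * u ≤ (C0 * u ^ (k-1)) * u := by
        calc (k * SB) * u ≤ C0 * u ^ k := le_trans h2 h3
          _ = (C0 * u ^ (k-1)) * u := by rw [h4]; ring
      have h6 : (k:ℝ) * SB ≤ C0 * u ^ (k-1) := le_of_mul_le_mul_right h5 hu
      have h7 : u ^ (k-1) ≤ u := by
        calc u ^ (k-1) ≤ u ^ 1 := pow_le_pow_of_le_one (le_of_lt hu) hu1 (by omega)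
          _ = u := pow_one u
      calc (k:ℝ) * SB ≤ C0 * u ^ (k-1) := h6
        _ ≤ C0 * u := mul_le_mul_of_nonneg_left h7 hC0nn
    have hSBz : SB = 0 := by
      by_contra hne
      have hSBpos : 0 < SB := lt_of_le_of_ne hSB0 (Ne.symm hne)
      have hBpos : 0 < (k:ℝ) * SB := mul_pos hk0 hSBpos
      set u : ℝ := min 1 (((k:ℝ) * SB) / (C0 + 1)) with hu
      have hu0 : 0 < u := lt_min one_pos (div_pos hBpos (by linarith))
      have hu1 : u ≤ 1 := min_le_left _ _
      have hu2 : u * (C0 + 1) ≤ (k:ℝ) * SB := by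
        have h9 := min_le_right 1 (((k:ℝ) * SB) / (C0 + 1))
        rw [← le_div_iff₀ (by linarith : (0:ℝ) < C0 + 1)]
        exact h9
      have h9 := hBle u hu0 hu1
      nlinarith
    rw [hWr, hSBz, hyi0, zero_pow (by omega : k - 1 ≠ 0)]
    ring

lemma connected_cross {n : ℕ} (E : Finset (Finset (Fin n))) (hconn : HConnected E)
    (S : Fin n → Prop) (a0 w : Fin n) (ha0 : S a0) (hw : ¬ S w) :
    ∃ e ∈ E, (∃ a ∈ e, S a) ∧ (∃ b ∈ e, ¬ S b) := by
  suffices h : ∀ v, Relation.ReflTransGen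
      (fun a b : Fin n => ∃ e ∈ E, a ∈ e ∧ b ∈ e) a0 v → ¬ S v →
      ∃ e ∈ E, (∃ a ∈ e, S a) ∧ (∃ b ∈ e, ¬ S b) by
    exact h w (hconn a0 w) hw
  intro v hv
  induction hv with
  | refl => intro hv0; exact absurd ha0 hv0
  | @tail b c h1 h2 ih =>
      intro hc
      by_cases hb : S b
      · obtain ⟨e, he, hbe, hce⟩ := h2
        exact ⟨e, he, ⟨b, hbe, hb⟩, ⟨c, hce, hc⟩⟩
      · exact ih hb

lemma maximizer_pos {n k : ℕ} (hk : 3 ≤ k) (E : Finset (Finset (Fin n)))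
    (hunif : ∀ e ∈ E, e.card = k) (hconn : HConnected E)
    (y : Fin n → ℝ) (hy : ∀ i, 0 ≤ y i) (hNN : NN k y = 1)
    (hcmp : ∀ z : Fin n → ℝ, (∀ i, 0 ≤ z i) → FF E k z ≤ FF E k y * NN k z) :
    ∀ i, 0 < y i := by
  classical
  set lam := FF E k y with hlam
  have hlam0 : 0 ≤ lam := FF_nonneg E y hy
  by_contra hcon
  push_neg at hcon
  obtain ⟨w, hwle⟩ := hcon
  have hw0 : y w = 0 := le_antisymm hwle (hy w)
  have hw : ¬ (0 < y w) := by rw [hw0]; exact lt_irrefl 0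
  set SS : Finset (Fin n) := Finset.univ.filter (fun i => 0 < y i) with hSS
  have hSSne : SS.Nonempty := by
    by_contra hne
    rw [Finset.not_nonempty_iff_eq_empty] at hne
    have hzero : ∀ i, y i = 0 := by
      intro i
      by_contra h0
      have : i ∈ SS := by
        rw [hSS, Finset.mem_filter]
        exact ⟨Finset.mem_univ i, lt_of_le_of_ne (hy i) (Ne.symm h0)⟩
      rw [hne] at this
      exact absurd this (Finset.notMem_empty i)
    have : NN k y = 0 := by
      unfold NN
      apply Finset.sum_eq_zero
      intro i _
      rw [hzero i, zero_pow (by omega : k ≠ 0)]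
    rw [hNN] at this
    norm_num at this
  obtain ⟨a0, ha0⟩ := hSSne
  have ha0pos : 0 < y a0 := (Finset.mem_filter.mp ha0).2
  obtain ⟨e0, he0, ⟨a', ha'e, ha'pos⟩, ⟨b', hb'e, hb'npos⟩⟩ :=
    connected_cross E hconn (fun i => 0 < y i) a0 w ha0pos hw
  have hb'0 : y b' = 0 := le_antisymm (le_of_not_gt hb'npos) (hy b')
  -- minimum positive value
  have hSSim : (SS.image y).Nonempty := Finset.Nonempty.image ⟨a0, ha0⟩ y
  set m0 : ℝ := (SS.image y).min' hSSim with hm0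
  have hm0mem : m0 ∈ SS.image y := Finset.min'_mem _ _
  have hm0pos : 0 < m0 := by
    obtain ⟨a, haS, hay⟩ := Finset.mem_image.mp hm0mem
    rw [← hay]
    exact (Finset.mem_filter.mp haS).2
  have hm0le : ∀ v, 0 < y v → m0 ≤ y v := by
    intro v hv
    apply Finset.min'_le
    exact Finset.mem_image_of_mem y (Finset.mem_filter.mpr ⟨Finset.mem_univ v, hv⟩)
  have hL0 : 0 ≤ lam * (n:ℝ) := mul_nonneg hlam0 (Nat.cast_nonneg n)
  have hkm0 : 0 < (k:ℝ) * m0 := mul_pos (by positivity) hm0pos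
  set ε : ℝ := min m0 (((k:ℝ) * m0) / (2 * (lam * (n:ℝ) + 1))) with hε
  have hε0 : 0 < ε := lt_min hm0pos (div_pos hkm0 (by linarith))
  have hεm0 : ε ≤ m0 := min_le_left _ _
  set z : Fin n → ℝ := fun i => if 0 < y i then y i else ε with hz
  have hz0 : ∀ i, 0 ≤ z i := by
    intro i; rw [hz]; dsimp only; split
    · exact hy i
    · exact le_of_lt hε0
  have hzy : ∀ i, y i ≤ z i := by
    intro i; rw [hz]; dsimp only; split
    · exact le_rfl
    · rename_i h; rw [le_antisymm (le_of_not_gt h) (hy i)]; exact le_of_lt hε0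
  have hzε : ∀ i, ε ≤ z i := by
    intro i; rw [hz]; dsimp only; split
    · rename_i h; exact le_trans hεm0 (hm0le i h)
    · exact le_rfl
  have hza' : m0 ≤ z a' := by
    rw [hz]; dsimp only
    rw [if_pos ha'pos]
    exact hm0le a' ha'pos
  -- FF z is large
  have hprodz : m0 * ε ^ (k-1) ≤ ∏ v ∈ e0, z v := by
    rw [← Finset.mul_prod_erase e0 z ha'e]
    apply mul_le_mul hza' _ (by positivity) (le_trans (le_of_lt hm0pos) hza')
    calc ε ^ (k-1) = ∏ _v ∈ e0.erase a', ε := by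
          rw [Finset.prod_const, Finset.card_erase_of_mem ha'e, hunif e0 he0]
      _ ≤ ∏ v ∈ e0.erase a', z v :=
          Finset.prod_le_prod (fun v _ => le_of_lt hε0) (fun v _ => hzε v)
  have hprody0 : ∏ v ∈ e0, y v = 0 := Finset.prod_eq_zero hb'e hb'0
  have hsum1 : ∑ i, (deg E i : ℝ) * y i ^ k ≤ ∑ i, (deg E i : ℝ) * z i ^ k := by
    apply Finset.sum_le_sum
    intro i _
    exact mul_le_mul_of_nonneg_left (pow_le_pow_left₀ (hy i) (hzy i) k) (Nat.cast_nonneg _)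
  have hsum2 : (∑ e ∈ E, ∏ v ∈ e, y v) + m0 * ε ^ (k-1) ≤ ∑ e ∈ E, ∏ v ∈ e, z v := by
    rw [← Finset.add_sum_erase E (fun e => ∏ v ∈ e, z v) he0]
    rw [← Finset.add_sum_erase E (fun e => ∏ v ∈ e, y v) he0]
    rw [hprody0, zero_add]
    have h1 : ∑ e ∈ E.erase e0, ∏ v ∈ e, y v ≤ ∑ e ∈ E.erase e0, ∏ v ∈ e, z v := by
      apply Finset.sum_le_sum
      intro e _
      exact Finset.prod_le_prod (fun v _ => hy v) (fun v _ => hzy v)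
    linarith [hprodz, h1]
  have hFFz : lam + (k:ℝ) * (m0 * ε ^ (k-1)) ≤ FF E k z := by
    have h0 : FF E k y = lam := rfl
    unfold FF at h0 ⊢
    have hk0 : (0:ℝ) ≤ k := Nat.cast_nonneg k
    have h2 := mul_le_mul_of_nonneg_left hsum2 hk0
    rw [mul_add] at h2
    linarith [hsum1, h2]
  -- NN z is close to 1
  have hNNz : NN k z ≤ 1 + n * ε ^ k := by
    unfold NN
    have h1 : ∀ i, z i ^ k ≤ y i ^ k + ε ^ k := by
      intro i
      rw [hz]; dsimp only; split
      · nlinarith [pow_pos hε0 k]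
      · rename_i h
        rw [le_antisymm (le_of_not_gt h) (hy i), zero_pow (by omega : k ≠ 0)]
        linarith
    calc ∑ i, z i ^ k ≤ ∑ i, (y i ^ k + ε ^ k) := Finset.sum_le_sum (fun i _ => h1 i)
      _ = NN k y + n * ε ^ k := by
          rw [Finset.sum_add_distrib, Finset.sum_const, Finset.card_univ, Fintype.card_fin]
          unfold NN; ring
      _ = 1 + n * ε ^ k := by rw [hNN]
  have hfinal := hcmp z hz0
  have hchain : lam + (k:ℝ) * (m0 * ε ^ (k-1)) ≤ lam * (1 + n * ε ^ k) := by
    calc lam + (k:ℝ) * (m0 * ε ^ (k-1)) ≤ FF E k z := hFFz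
      _ ≤ lam * NN k z := hfinal
      _ ≤ lam * (1 + n * ε ^ k) := mul_le_mul_of_nonneg_left hNNz hlam0
  have hεk : ε ^ k = ε ^ (k-1) * ε := by rw [← pow_succ, (by omega : k - 1 + 1 = k)]
  have hchain' : (k:ℝ) * m0 * ε ^ (k-1) ≤ (lam * (n:ℝ) * ε) * ε ^ (k-1) := by
    have h2 : lam * (1 + (n:ℝ) * ε ^ k) = lam + (lam * (n:ℝ) * ε) * ε ^ (k-1) := by
      rw [hεk]; ring
    rw [h2] at hchain
    linarith [hchain]
  have hp : 0 < ε ^ (k-1) := pow_pos hε0 _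
  have hstep : (k:ℝ) * m0 ≤ lam * (n:ℝ) * ε := le_of_mul_le_mul_right hchain' hp
  have hεle : ε * (2 * (lam * (n:ℝ) + 1)) ≤ (k:ℝ) * m0 := by
    have h9 := min_le_right m0 (((k:ℝ) * m0) / (2 * (lam * (n:ℝ) + 1)))
    rw [← le_div_iff₀ (by linarith : (0:ℝ) < 2 * (lam * (n:ℝ) + 1))]
    exact h9
  nlinarith [hstep, hεle, hε0, hL0, mul_nonneg hL0 (le_of_lt hε0)]

lemma exists_pos_eigenvec {n k : ℕ} (hn : 0 < n) (hk : 3 ≤ k) (E : Finset (Finset (Fin n)))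
    (hunif : ∀ e ∈ E, e.card = k) (hconn : HConnected E) :
    ∃ (y : Fin n → ℝ) (lam : ℝ), (∀ i, 0 < y i) ∧ 0 ≤ lam ∧
      (∀ i, Wr E k y i = lam * y i ^ (k-1)) := by
  obtain ⟨y, hy, hNN, hmax⟩ := exists_maximizer hn hk E
  have hcmp := global_cmp hk E hunif y hy hNN hmax
  have hW := first_order hk E hunif y hy hNN hcmp
  have hpos := maximizer_pos hk E hunif hconn y hy hNN hcmp
  exact ⟨y, FF E k y, hpos, FF_nonneg E y hy, hW⟩

lemma rpow_neginv_pos (m : ℕ) (a : ℝ) (ha : 0 < a) : 0 < a ^ (-(1:ℝ)/m) :=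
  Real.rpow_pos_of_pos ha _

lemma rpow_neginv_pow (m : ℕ) (hm : m ≠ 0) (a : ℝ) (ha : 0 < a) :
    (a ^ (-(1:ℝ)/m)) ^ m = a⁻¹ := by
  rw [← Real.rpow_natCast (a ^ (-(1:ℝ)/m)) m, ← Real.rpow_mul (le_of_lt ha)]
  rw [show (-(1:ℝ)/m) * (m:ℝ) = -1 by
    field_simp]
  exact Real.rpow_neg_one a

lemma rpow_neginv_anti (m : ℕ) {a b : ℝ} (hb : 0 < b) (hba : b ≤ a) :
    a ^ (-(1:ℝ)/m) ≤ b ^ (-(1:ℝ)/m) := by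
  have ha : 0 < a := lt_of_lt_of_le hb hba
  have h1 : -(1:ℝ)/m = -((1:ℝ)/m) := by ring
  rw [h1, Real.rpow_neg (le_of_lt ha), Real.rpow_neg (le_of_lt hb)]
  have h2 : b ^ ((1:ℝ)/m) ≤ a ^ ((1:ℝ)/m) :=
    Real.rpow_le_rpow (le_of_lt hb) hba (by positivity)
  have h3 : 0 < b ^ ((1:ℝ)/m) := Real.rpow_pos_of_pos hb _
  exact inv_anti₀ h3 h2

lemma rpow_neginv_inj (m : ℕ) (hm : m ≠ 0) {a b : ℝ} (ha : 0 < a) (hb : 0 < b)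
    (h : a ^ (-(1:ℝ)/m) = b ^ (-(1:ℝ)/m)) : a = b := by
  have h1 : (a ^ (-(1:ℝ)/m)) ^ m = (b ^ (-(1:ℝ)/m)) ^ m := by rw [h]
  rw [rpow_neginv_pow m hm a ha, rpow_neginv_pow m hm b hb] at h1
  exact inv_injective h1

lemma rpow_neginv_le_one (m : ℕ) {a : ℝ} (ha : 1 ≤ a) : a ^ (-(1:ℝ)/m) ≤ 1 := by
  apply Real.rpow_le_one_of_one_le_of_nonpos ha
  rw [show -(1:ℝ)/m = -((1:ℝ)/m) by ring]
  have : (0:ℝ) ≤ (1:ℝ)/m := by positivity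
  linarith

lemma prod_eq_of_le_of_eq {α : Type*} {s : Finset α} {f g : α → ℝ}
    (hpos : ∀ a ∈ s, 0 < f a) (hle : ∀ a ∈ s, f a ≤ g a)
    (heq : ∏ a ∈ s, f a = ∏ a ∈ s, g a) : ∀ a ∈ s, f a = g a := by
  intro a ha
  by_contra hne
  have hlt : f a < g a := lt_of_le_of_ne (hle a ha) hne
  have := Finset.prod_lt_prod hpos hle ⟨a, ha, hlt⟩
  rw [heq] at this
  exact lt_irrefl _ this

lemma sum_eq_of_le_of_eq {α : Type*} {s : Finset α} {f g : α → ℝ}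
    (hle : ∀ a ∈ s, f a ≤ g a)
    (heq : ∑ a ∈ s, f a = ∑ a ∈ s, g a) : ∀ a ∈ s, f a = g a := by
  intro a ha
  by_contra hne
  have hlt : f a < g a := lt_of_le_of_ne (hle a ha) hne
  have := Finset.sum_lt_sum hle ⟨a, ha, hlt⟩
  rw [heq] at this
  exact lt_irrefl _ this

lemma connected_all {n : ℕ} (E : Finset (Finset (Fin n))) (hconn : HConnected E)
    (S : Set (Fin n)) (i0 : Fin n) (hi0 : i0 ∈ S)
    (hclosed : ∀ v ∈ S, ∀ e ∈ E, v ∈ e → ∀ u ∈ e, u ∈ S) :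
    ∀ v, v ∈ S := by
  intro v
  have h := hconn i0 v
  induction h with
  | refl => exact hi0
  | @tail b c h1 h2 ih =>
      obtain ⟨e, he, hbe, hce⟩ := h2
      exact hclosed b ih e he hbe c hce

lemma exists_edge_of_deg {n : ℕ} (E : Finset (Finset (Fin n))) (i : Fin n)
    (h : 1 ≤ deg E i) : ∃ e ∈ E, i ∈ e := by
  unfold deg at h
  obtain ⟨e, he⟩ := Finset.card_pos.mp h
  rw [Finset.mem_filter] at he
  exact ⟨e, he.1, he.2⟩

lemma exists_other {n k : ℕ} (hk : 3 ≤ k) (E : Finset (Finset (Fin n)))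
    (hunif : ∀ e ∈ E, e.card = k) (e : Finset (Fin n)) (he : e ∈ E) (i : Fin n)
    (hie : i ∈ e) : ∃ j ∈ e, j ≠ i := by
  have h1 : 1 < e.card := by rw [hunif e he]; omega
  obtain ⟨a, ha, b, hb, hab⟩ := Finset.one_lt_card.mp h1
  rcases eq_or_ne a i with rfl | hai
  · exact ⟨b, hb, fun h => hab h.symm⟩
  · exact ⟨a, ha, hai⟩

set_option maxHeartbeats 2000000 in
lemma upper_main {n k : ℕ} (hn : 0 < n) (hk : 3 ≤ k) (E : Finset (Finset (Fin n)))
    (hunif : ∀ e ∈ E, e.card = k) (hconn : HConnected E)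
    (y : Fin n → ℝ) (lam : ℝ) (hy : ∀ i, 0 < y i)
    (hW : ∀ i, Wr E k y i = lam * y i ^ (k-1))
    (M : ℝ) (hd1 : ∀ i, 1 ≤ deg E i)
    (hpair : ∀ e ∈ E, ∀ i ∈ e, ∀ j ∈ e, i ≠ j → (deg E i : ℝ) + (deg E j : ℝ) ≤ M) :
    lam ≤ M ∧ (lam = M →
      ∀ e ∈ E, ∀ i ∈ e, ∀ j ∈ e, i ≠ j → (deg E i : ℝ) + (deg E j : ℝ) = M) := by
  classical
  have hkm1 : k - 1 ≠ 0 := by omega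
  have hdpos : ∀ i, (0:ℝ) < (deg E i : ℝ) := by
    intro i
    have : (1:ℝ) ≤ (deg E i : ℝ) := by exact_mod_cast hd1 i
    linarith
  have hdegM : ∀ i, (deg E i : ℝ) < M := by
    intro i
    obtain ⟨e, he, hie⟩ := exists_edge_of_deg E i (hd1 i)
    obtain ⟨j, hje, hji⟩ := exists_other hk E hunif e he i hie
    have h1 := hpair e he i hie j hje (fun h => hji h.symm)
    have h2 : (1:ℝ) ≤ (deg E j : ℝ) := by exact_mod_cast hd1 j
    linarith
  set x : Fin n → ℝ := fun i => (M - (deg E i : ℝ)) ^ (-(1:ℝ)/((k-1 : ℕ) : ℝ)) with hxdef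
  have hMd : ∀ i, 0 < M - (deg E i : ℝ) := fun i => by linarith [hdegM i]
  have hx : ∀ i, 0 < x i := by
    intro i
    simp only [hxdef]
    exact rpow_neginv_pos (k-1) (M - (deg E i : ℝ)) (hMd i)
  have hxpow : ∀ i, x i ^ (k-1) = (M - (deg E i : ℝ))⁻¹ := by
    intro i
    simp only [hxdef]
    exact rpow_neginv_pow (k-1) hkm1 (M - (deg E i : ℝ)) (hMd i)
  have hbound : ∀ i, ∀ e ∈ E.filter (fun e => i ∈ e), ∀ v ∈ e.erase i,
      x v ≤ ((deg E i : ℝ)) ^ (-(1:ℝ)/((k-1 : ℕ) : ℝ)) := by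
    intro i e he v hv
    rw [Finset.mem_filter] at he
    rcases Finset.mem_erase.mp hv with ⟨hvi, hve⟩
    have hp := hpair e he.1 v hve i he.2 hvi
    simp only [hxdef]
    apply rpow_neginv_anti _ (hdpos i)
    linarith [hp]
  have hterm : ∀ i, ∀ e ∈ E.filter (fun e => i ∈ e),
      ∏ v ∈ e.erase i, x v ≤ ((deg E i : ℝ))⁻¹ := by
    intro i e he
    have he' := Finset.mem_filter.mp he
    calc ∏ v ∈ e.erase i, x v ≤ ∏ _v ∈ e.erase i, ((deg E i : ℝ)) ^ (-(1:ℝ)/((k-1 : ℕ) : ℝ)) :=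
          Finset.prod_le_prod (fun v _ => le_of_lt (hx v)) (hbound i e he)
      _ = (((deg E i : ℝ)) ^ (-(1:ℝ)/((k-1 : ℕ) : ℝ))) ^ (k-1) := by
          rw [Finset.prod_const, Finset.card_erase_of_mem he'.2, hunif e he'.1]
      _ = ((deg E i : ℝ))⁻¹ := rpow_neginv_pow (k-1) hkm1 _ (hdpos i)
  have hconstsum : ∀ i : Fin n, ∑ _e ∈ E.filter (fun e => i ∈ e), ((deg E i : ℝ))⁻¹ = 1 := by
    intro i
    rw [Finset.sum_const, nsmul_eq_mul]
    have hcard : ((E.filter (fun e => i ∈ e)).card : ℝ) = (deg E i : ℝ) := by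
      unfold deg
      norm_num
    rw [hcard]
    exact mul_inv_cancel₀ (ne_of_gt (hdpos i))
  have hsum : ∀ i, ∑ e ∈ E.filter (fun e => i ∈ e), ∏ v ∈ e.erase i, x v ≤ 1 := by
    intro i
    calc ∑ e ∈ E.filter (fun e => i ∈ e), ∏ v ∈ e.erase i, x v
        ≤ ∑ _e ∈ E.filter (fun e => i ∈ e), ((deg E i : ℝ))⁻¹ :=
          Finset.sum_le_sum (hterm i)
      _ = 1 := hconstsum i
  have hMxid : ∀ i, M * x i ^ (k-1)
      = (deg E i : ℝ) * x i ^ (k-1) + 1 := by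
    intro i
    rw [hxpow i]
    have hne : M - (deg E i : ℝ) ≠ 0 := ne_of_gt (hMd i)
    field_simp
    ring
  have hWx : ∀ i, Wr E k x i ≤ M * x i ^ (k-1) := by
    intro i
    have h1 : Wr E k x i = (deg E i : ℝ) * x i ^ (k-1)
        + ∑ e ∈ E.filter (fun e => i ∈ e), ∏ v ∈ e.erase i, x v := rfl
    rw [h1, hMxid i]
    linarith [hsum i]
  obtain ⟨i0, -, hi0⟩ := Finset.exists_max_image Finset.univ (fun i => y i / x i)
    ⟨⟨0, hn⟩, Finset.mem_univ _⟩
  set s : ℝ := y i0 / x i0 with hs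
  have hspos : 0 < s := div_pos (hy i0) (hx i0)
  have hptw : ∀ i, y i ≤ s * x i := by
    intro i
    have := (div_le_iff₀ (hx i)).mp (hi0 i (Finset.mem_univ i))
    linarith
  have hyi0 : y i0 = s * x i0 := by rw [hs, div_mul_cancel₀ _ (ne_of_gt (hx i0))]
  have chain : ∀ v, y v = s * x v → lam * y v ^ (k-1) ≤ M * y v ^ (k-1) := by
    intro v hv
    have h1 : Wr E k y v ≤ Wr E k (fun u => s * x u) v :=
      Wr_nonneg_mono E y _ (fun i => le_of_lt (hy i)) hptw v
    have h2 : Wr E k (fun u => s * x u) v = s^(k-1) * Wr E k x v := Wr_smul E hunif s x v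
    have h3 : s^(k-1) * Wr E k x v ≤ s^(k-1) * (M * x v ^ (k-1)) :=
      mul_le_mul_of_nonneg_left (hWx v) (by positivity)
    have h4 : s^(k-1) * (M * x v ^ (k-1)) = M * y v ^ (k-1) := by rw [hv, mul_pow]; ring
    calc lam * y v ^ (k-1) = Wr E k y v := (hW v).symm
      _ ≤ Wr E k (fun u => s * x u) v := h1
      _ = s^(k-1) * Wr E k x v := h2
      _ ≤ s^(k-1) * (M * x v ^ (k-1)) := h3
      _ = M * y v ^ (k-1) := h4
  have hlamM : lam ≤ M := by
    have h1 := chain i0 hyi0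
    have h2 : 0 < y i0 ^ (k-1) := pow_pos (hy i0) _
    exact le_of_mul_le_mul_right (by linarith [h1]) h2
  refine ⟨hlamM, ?_⟩
  intro hlameq
  -- equality analysis
  set SSet : Set (Fin n) := {v | y v = s * x v} with hSSet
  have hstep : ∀ v ∈ SSet, (∀ e ∈ E, v ∈ e → ∀ u ∈ e, u ∈ SSet)
      ∧ (∀ e ∈ E, v ∈ e → ∀ u ∈ e.erase v, (deg E u : ℝ) + (deg E v : ℝ) = M) := by
    intro v hv
    have hv' : y v = s * x v := hv
    -- collapse the chain at v
    have h1 : Wr E k y v ≤ Wr E k (fun u => s * x u) v :=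
      Wr_nonneg_mono E y _ (fun i => le_of_lt (hy i)) hptw v
    have h2 : Wr E k (fun u => s * x u) v = s^(k-1) * Wr E k x v := Wr_smul E hunif s x v
    have h3 : s^(k-1) * Wr E k x v ≤ s^(k-1) * (M * x v ^ (k-1)) :=
      mul_le_mul_of_nonneg_left (hWx v) (by positivity)
    have h4 : s^(k-1) * (M * x v ^ (k-1)) = M * y v ^ (k-1) := by rw [hv', mul_pow]; ring
    have h5 : Wr E k y v = M * y v ^ (k-1) := by rw [hW v, hlameq]
    have heq1 : Wr E k y v = Wr E k (fun u => s * x u) v := by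
      apply le_antisymm h1
      calc Wr E k (fun u => s * x u) v = s^(k-1) * Wr E k x v := h2
        _ ≤ s^(k-1) * (M * x v ^ (k-1)) := h3
        _ = M * y v ^ (k-1) := h4
        _ = Wr E k y v := h5.symm
    have heq2 : Wr E k x v = M * x v ^ (k-1) := by
      have h6 : s^(k-1) * Wr E k x v = s^(k-1) * (M * x v ^ (k-1)) := by
        rw [← h2, ← heq1, h5, ← h4]
      exact mul_left_cancel₀ (by positivity) h6
    -- from heq1 : termwise equality of edge sums
    have hdegterm : (deg E v : ℝ) * y v ^ (k-1)
        = (deg E v : ℝ) * (s * x v) ^ (k-1) := by rw [← hv']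
    have hsums : ∑ e ∈ E.filter (fun e => v ∈ e), ∏ u ∈ e.erase v, y u
        = ∑ e ∈ E.filter (fun e => v ∈ e), ∏ u ∈ e.erase v, (s * x u) := by
      have ha : Wr E k y v = (deg E v : ℝ) * y v ^ (k-1)
          + ∑ e ∈ E.filter (fun e => v ∈ e), ∏ u ∈ e.erase v, y u := rfl
      have hb : Wr E k (fun u => s * x u) v = (deg E v : ℝ) * (s * x v) ^ (k-1)
          + ∑ e ∈ E.filter (fun e => v ∈ e), ∏ u ∈ e.erase v, (s * x u) := rfl
      rw [ha, hb] at heq1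
      linarith [heq1, hdegterm]
    have hedge1 : ∀ e ∈ E.filter (fun e => v ∈ e),
        ∏ u ∈ e.erase v, y u = ∏ u ∈ e.erase v, (s * x u) := by
      apply sum_eq_of_le_of_eq _ hsums
      intro e _
      exact Finset.prod_le_prod (fun u _ => le_of_lt (hy u)) (fun u _ => hptw u)
    have hfac1 : ∀ e ∈ E.filter (fun e => v ∈ e), ∀ u ∈ e.erase v, y u = s * x u := by
      intro e he
      exact prod_eq_of_le_of_eq (fun u _ => hy u) (fun u _ => hptw u) (hedge1 e he)
    -- from heq2 : termwise equality of products against constants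
    have hsums2 : ∑ e ∈ E.filter (fun e => v ∈ e), ∏ u ∈ e.erase v, x u
        = ∑ _e ∈ E.filter (fun e => v ∈ e), ((deg E v : ℝ))⁻¹ := by
      have ha : Wr E k x v = (deg E v : ℝ) * x v ^ (k-1)
          + ∑ e ∈ E.filter (fun e => v ∈ e), ∏ u ∈ e.erase v, x u := rfl
      rw [ha, hMxid v] at heq2
      rw [hconstsum v]
      linarith [heq2]
    have hedge2 : ∀ e ∈ E.filter (fun e => v ∈ e),
        ∏ u ∈ e.erase v, x u = ((deg E v : ℝ))⁻¹ := by
      intro e he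
      have := sum_eq_of_le_of_eq (hterm v) hsums2 e he
      exact this
    have hfac2 : ∀ e ∈ E.filter (fun e => v ∈ e), ∀ u ∈ e.erase v,
        x u = ((deg E v : ℝ)) ^ (-(1:ℝ)/((k-1 : ℕ) : ℝ)) := by
      intro e he
      apply prod_eq_of_le_of_eq (fun u _ => hx u) (hbound v e he)
      rw [hedge2 e he, Finset.prod_const,
        Finset.card_erase_of_mem (Finset.mem_filter.mp he).2,
        hunif e (Finset.mem_filter.mp he).1,
        rpow_neginv_pow (k-1) hkm1 _ (hdpos v)]
    constructor
    · intro e he hve u hue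
      rcases eq_or_ne u v with rfl | huv
      · exact hv
      · have : u ∈ e.erase v := Finset.mem_erase.mpr ⟨huv, hue⟩
        exact hfac1 e (Finset.mem_filter.mpr ⟨he, hve⟩) u this
    · intro e he hve u hue
      have h7 := hfac2 e (Finset.mem_filter.mpr ⟨he, hve⟩) u hue
      rw [hxdef] at h7
      have h8 : M - (deg E u : ℝ) = (deg E v : ℝ) :=
        rpow_neginv_inj (k-1) hkm1 (hMd u) (hdpos v) h7
      linarith [h8]
  have hall : ∀ v, v ∈ SSet :=
    connected_all E hconn SSet i0 hyi0 (fun v hv => (hstep v hv).1)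
  intro e he i hie j hje hij
  have hj := hall j
  exact (hstep j hj).2 e he hje i (Finset.mem_erase.mpr ⟨hij, hie⟩)

set_option maxHeartbeats 1000000 in
lemma lower_main {n k : ℕ} (hn : 0 < n) (hk : 3 ≤ k) (E : Finset (Finset (Fin n)))
    (hunif : ∀ e ∈ E, e.card = k) (hconn : HConnected E)
    (y : Fin n → ℝ) (lam : ℝ) (hy : ∀ i, 0 < y i)
    (hW : ∀ i, Wr E k y i = lam * y i ^ (k-1))
    (m : ℝ) (hd1 : ∀ i, 1 ≤ deg E i)
    (hpair : ∀ e ∈ E, ∀ i ∈ e, ∀ j ∈ e, i ≠ j → m ≤ (deg E i : ℝ) + (deg E j : ℝ)) :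
    m ≤ lam ∧ (lam = m →
      ∀ e ∈ E, ∀ i ∈ e, ∀ j ∈ e, i ≠ j → (deg E i : ℝ) + (deg E j : ℝ) = m) := by
  classical
  have hkm1 : k - 1 ≠ 0 := by omega
  have hdpos : ∀ i, (0:ℝ) < (deg E i : ℝ) := by
    intro i
    have : (1:ℝ) ≤ (deg E i : ℝ) := by exact_mod_cast hd1 i
    linarith
  set x : Fin n → ℝ := fun i =>
    if (deg E i : ℝ) < m then (m - (deg E i : ℝ)) ^ (-(1:ℝ)/((k-1 : ℕ) : ℝ)) else 2
    with hxdef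
  have hx : ∀ i, 0 < x i := by
    intro i
    simp only [hxdef]
    split
    · rename_i h
      exact rpow_neginv_pos (k-1) (m - (deg E i : ℝ)) (by linarith)
    · norm_num
  have hxpow : ∀ i, (deg E i : ℝ) < m → x i ^ (k-1) = (m - (deg E i : ℝ))⁻¹ := by
    intro i h
    simp only [hxdef]
    rw [if_pos h]
    exact rpow_neginv_pow (k-1) hkm1 (m - (deg E i : ℝ)) (by linarith)
  have hbound : ∀ i, ∀ e ∈ E.filter (fun e => i ∈ e), ∀ v ∈ e.erase i,
      ((deg E i : ℝ)) ^ (-(1:ℝ)/((k-1 : ℕ) : ℝ)) ≤ x v := by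
    intro i e he v hv
    rw [Finset.mem_filter] at he
    rcases Finset.mem_erase.mp hv with ⟨hvi, hve⟩
    have hp := hpair e he.1 v hve i he.2 hvi
    simp only [hxdef]
    split
    · rename_i h
      apply rpow_neginv_anti _ (by linarith : (0:ℝ) < m - (deg E v : ℝ))
      linarith [hp]
    · calc ((deg E i : ℝ)) ^ (-(1:ℝ)/((k-1 : ℕ) : ℝ)) ≤ 1 :=
            rpow_neginv_le_one (k-1) (by exact_mod_cast hd1 i)
        _ ≤ 2 := by norm_num
  have hterm : ∀ i, ∀ e ∈ E.filter (fun e => i ∈ e),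
      ((deg E i : ℝ))⁻¹ ≤ ∏ v ∈ e.erase i, x v := by
    intro i e he
    have he' := Finset.mem_filter.mp he
    calc ((deg E i : ℝ))⁻¹
        = (((deg E i : ℝ)) ^ (-(1:ℝ)/((k-1 : ℕ) : ℝ))) ^ (k-1) :=
          (rpow_neginv_pow (k-1) hkm1 _ (hdpos i)).symm
      _ = ∏ _v ∈ e.erase i, ((deg E i : ℝ)) ^ (-(1:ℝ)/((k-1 : ℕ) : ℝ)) := by
          rw [Finset.prod_const, Finset.card_erase_of_mem he'.2, hunif e he'.1]
      _ ≤ ∏ v ∈ e.erase i, x v :=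
          Finset.prod_le_prod
            (fun v _ => le_of_lt (rpow_neginv_pos (k-1) _ (hdpos i)))
            (hbound i e he)
  have hconstsum : ∀ i : Fin n, ∑ _e ∈ E.filter (fun e => i ∈ e), ((deg E i : ℝ))⁻¹ = 1 := by
    intro i
    rw [Finset.sum_const, nsmul_eq_mul]
    have hcard : ((E.filter (fun e => i ∈ e)).card : ℝ) = (deg E i : ℝ) := by
      unfold deg
      norm_num
    rw [hcard]
    exact mul_inv_cancel₀ (ne_of_gt (hdpos i))
  have hsum : ∀ i, 1 ≤ ∑ e ∈ E.filter (fun e => i ∈ e), ∏ v ∈ e.erase i, x v := by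
    intro i
    calc (1:ℝ) = ∑ _e ∈ E.filter (fun e => i ∈ e), ((deg E i : ℝ))⁻¹ := (hconstsum i).symm
      _ ≤ ∑ e ∈ E.filter (fun e => i ∈ e), ∏ v ∈ e.erase i, x v :=
          Finset.sum_le_sum (hterm i)
  have hsumpos : ∀ i, 0 < ∑ e ∈ E.filter (fun e => i ∈ e), ∏ v ∈ e.erase i, x v := by
    intro i
    calc (0:ℝ) < 1 := one_pos
      _ ≤ _ := hsum i
  have hMxid : ∀ i, (deg E i : ℝ) < m →
      m * x i ^ (k-1) = (deg E i : ℝ) * x i ^ (k-1) + 1 := by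
    intro i h
    rw [hxpow i h]
    have hne : m - (deg E i : ℝ) ≠ 0 := by
      intro h0; rw [sub_eq_zero] at h0; rw [← h0] at h; exact lt_irrefl _ h
    field_simp
    ring
  have hWx : ∀ i, m * x i ^ (k-1) ≤ Wr E k x i := by
    intro i
    have h1 : Wr E k x i = (deg E i : ℝ) * x i ^ (k-1)
        + ∑ e ∈ E.filter (fun e => i ∈ e), ∏ v ∈ e.erase i, x v := rfl
    rw [h1]
    rcases lt_or_ge ((deg E i : ℝ)) m with h | h
    · rw [hMxid i h]
      linarith [hsum i]
    · have h2 : m * x i ^ (k-1) ≤ (deg E i : ℝ) * x i ^ (k-1) :=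
        mul_le_mul_of_nonneg_right h (le_of_lt (pow_pos (hx i) _))
      linarith [hsumpos i]
  obtain ⟨i0, -, hi0⟩ := Finset.exists_min_image Finset.univ (fun i => y i / x i)
    ⟨⟨0, hn⟩, Finset.mem_univ _⟩
  set s : ℝ := y i0 / x i0 with hs
  have hspos : 0 < s := div_pos (hy i0) (hx i0)
  have hptw : ∀ i, s * x i ≤ y i := by
    intro i
    have := (le_div_iff₀ (hx i)).mp (hi0 i (Finset.mem_univ i))
    linarith
  have hyi0 : y i0 = s * x i0 := by rw [hs, div_mul_cancel₀ _ (ne_of_gt (hx i0))]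
  have hsxnn : ∀ i, 0 ≤ s * x i := fun i => le_of_lt (mul_pos hspos (hx i))
  have chain : ∀ v, y v = s * x v → m * y v ^ (k-1) ≤ lam * y v ^ (k-1) := by
    intro v hv
    have h1 : Wr E k (fun u => s * x u) v ≤ Wr E k y v :=
      Wr_nonneg_mono E _ y hsxnn hptw v
    have h2 : Wr E k (fun u => s * x u) v = s^(k-1) * Wr E k x v := Wr_smul E hunif s x v
    have h3 : s^(k-1) * (m * x v ^ (k-1)) ≤ s^(k-1) * Wr E k x v :=
      mul_le_mul_of_nonneg_left (hWx v) (by positivity)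
    have h4 : s^(k-1) * (m * x v ^ (k-1)) = m * y v ^ (k-1) := by rw [hv, mul_pow]; ring
    calc m * y v ^ (k-1) = s^(k-1) * (m * x v ^ (k-1)) := h4.symm
      _ ≤ s^(k-1) * Wr E k x v := h3
      _ = Wr E k (fun u => s * x u) v := h2.symm
      _ ≤ Wr E k y v := h1
      _ = lam * y v ^ (k-1) := hW v
  have hmlam : m ≤ lam := by
    have h1 := chain i0 hyi0
    have h2 : 0 < y i0 ^ (k-1) := pow_pos (hy i0) _
    exact le_of_mul_le_mul_right (by linarith [h1]) h2
  refine ⟨hmlam, ?_⟩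
  intro hlameq
  set SSet : Set (Fin n) := {v | y v = s * x v} with hSSet
  have hstep : ∀ v ∈ SSet, (∀ e ∈ E, v ∈ e → ∀ u ∈ e, u ∈ SSet)
      ∧ (∀ e ∈ E, v ∈ e → ∀ u ∈ e.erase v, (deg E u : ℝ) + (deg E v : ℝ) = m) := by
    intro v hv
    have hv' : y v = s * x v := hv
    have h1 : Wr E k (fun u => s * x u) v ≤ Wr E k y v :=
      Wr_nonneg_mono E _ y hsxnn hptw v
    have h2 : Wr E k (fun u => s * x u) v = s^(k-1) * Wr E k x v := Wr_smul E hunif s x v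
    have h3 : s^(k-1) * (m * x v ^ (k-1)) ≤ s^(k-1) * Wr E k x v :=
      mul_le_mul_of_nonneg_left (hWx v) (by positivity)
    have h4 : s^(k-1) * (m * x v ^ (k-1)) = m * y v ^ (k-1) := by rw [hv', mul_pow]; ring
    have h5 : Wr E k y v = m * y v ^ (k-1) := by rw [hW v, hlameq]
    have heq1 : Wr E k (fun u => s * x u) v = Wr E k y v := by
      apply le_antisymm h1
      calc Wr E k y v = m * y v ^ (k-1) := h5
        _ = s^(k-1) * (m * x v ^ (k-1)) := h4.symm
        _ ≤ s^(k-1) * Wr E k x v := h3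
        _ = Wr E k (fun u => s * x u) v := h2.symm
    have heq2 : Wr E k x v = m * x v ^ (k-1) := by
      have h6 : s^(k-1) * Wr E k x v = s^(k-1) * (m * x v ^ (k-1)) := by
        rw [← h2, heq1, h5, ← h4]
      exact mul_left_cancel₀ (by positivity) h6
    have hdvm : (deg E v : ℝ) < m := by
      by_contra hge
      push_neg at hge
      have ha : Wr E k x v = (deg E v : ℝ) * x v ^ (k-1)
          + ∑ e ∈ E.filter (fun e => v ∈ e), ∏ u ∈ e.erase v, x u := rfl
      have h7 : m * x v ^ (k-1) ≤ (deg E v : ℝ) * x v ^ (k-1) :=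
        mul_le_mul_of_nonneg_right hge (le_of_lt (pow_pos (hx v) _))
      have h8 := hsumpos v
      rw [ha] at heq2
      linarith [heq2, h7, h8]
    -- termwise equality of edge sums (heq1)
    have hdegterm : (deg E v : ℝ) * y v ^ (k-1)
        = (deg E v : ℝ) * (s * x v) ^ (k-1) := by rw [← hv']
    have hsums : ∑ e ∈ E.filter (fun e => v ∈ e), ∏ u ∈ e.erase v, (s * x u)
        = ∑ e ∈ E.filter (fun e => v ∈ e), ∏ u ∈ e.erase v, y u := by
      have ha : Wr E k y v = (deg E v : ℝ) * y v ^ (k-1)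
          + ∑ e ∈ E.filter (fun e => v ∈ e), ∏ u ∈ e.erase v, y u := rfl
      have hb : Wr E k (fun u => s * x u) v = (deg E v : ℝ) * (s * x v) ^ (k-1)
          + ∑ e ∈ E.filter (fun e => v ∈ e), ∏ u ∈ e.erase v, (s * x u) := rfl
      rw [ha, hb] at heq1
      linarith [heq1, hdegterm]
    have hfac1 : ∀ e ∈ E.filter (fun e => v ∈ e), ∀ u ∈ e.erase v, s * x u = y u := by
      intro e he
      apply prod_eq_of_le_of_eq (fun u _ => mul_pos hspos (hx u)) (fun u _ => hptw u)
      exact sum_eq_of_le_of_eq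
        (fun e' he' => Finset.prod_le_prod (fun u _ => hsxnn u) (fun u _ => hptw u))
        hsums e he
    -- termwise equality against constants (heq2)
    have hsums2 : ∑ _e ∈ E.filter (fun e => v ∈ e), ((deg E v : ℝ))⁻¹
        = ∑ e ∈ E.filter (fun e => v ∈ e), ∏ u ∈ e.erase v, x u := by
      have ha : Wr E k x v = (deg E v : ℝ) * x v ^ (k-1)
          + ∑ e ∈ E.filter (fun e => v ∈ e), ∏ u ∈ e.erase v, x u := rfl
      rw [ha, hMxid v hdvm] at heq2
      rw [hconstsum v]
      linarith [heq2]
    have hedge2 : ∀ e ∈ E.filter (fun e => v ∈ e),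
        ((deg E v : ℝ))⁻¹ = ∏ u ∈ e.erase v, x u :=
      sum_eq_of_le_of_eq (hterm v) hsums2
    have hfac2 : ∀ e ∈ E.filter (fun e => v ∈ e), ∀ u ∈ e.erase v,
        ((deg E v : ℝ)) ^ (-(1:ℝ)/((k-1 : ℕ) : ℝ)) = x u := by
      intro e he
      apply prod_eq_of_le_of_eq
        (fun u _ => rpow_neginv_pos (k-1) _ (hdpos v)) (hbound v e he)
      rw [← hedge2 e he, Finset.prod_const,
        Finset.card_erase_of_mem (Finset.mem_filter.mp he).2,
        hunif e (Finset.mem_filter.mp he).1,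
        rpow_neginv_pow (k-1) hkm1 _ (hdpos v)]
    constructor
    · intro e he hve u hue
      rcases eq_or_ne u v with rfl | huv
      · exact hv
      · have hmem : u ∈ e.erase v := Finset.mem_erase.mpr ⟨huv, hue⟩
        exact (hfac1 e (Finset.mem_filter.mpr ⟨he, hve⟩) u hmem).symm
    · intro e he hve u hue
      have h7 := (hfac2 e (Finset.mem_filter.mpr ⟨he, hve⟩) u hue).symm
      have hdum : (deg E u : ℝ) < m := by
        by_contra hge
        push_neg at hge
        have hxu2 : x u = 2 := by
          simp only [hxdef]
          rw [if_neg (not_lt.mpr hge)]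
        rw [hxu2] at h7
        have : ((deg E v : ℝ)) ^ (-(1:ℝ)/((k-1 : ℕ) : ℝ)) ≤ 1 :=
          rpow_neginv_le_one (k-1) (by exact_mod_cast hd1 v)
        rw [← h7] at this
        norm_num at this
      rw [show x u = (m - (deg E u : ℝ)) ^ (-(1:ℝ)/((k-1 : ℕ) : ℝ)) by
        simp only [hxdef]; rw [if_pos hdum]] at h7
      have h8 : m - (deg E u : ℝ) = (deg E v : ℝ) :=
        rpow_neginv_inj (k-1) hkm1 (by linarith) (hdpos v) h7
      linarith [h8]
  have hall : ∀ v, v ∈ SSet :=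
    connected_all E hconn SSet i0 hyi0 (fun v hv => (hstep v hv).1)
  intro e he i hie j hje hij
  have hj := hall j
  exact (hstep j hj).2 e he hje i (Finset.mem_erase.mpr ⟨hij, hie⟩)

lemma deg_ge_one {n k : ℕ} (hk : 3 ≤ k) (E : Finset (Finset (Fin n)))
    (hunif : ∀ e ∈ E, e.card = k) (hconn : HConnected E)
    (hEne : E.Nonempty) : ∀ v : Fin n, 1 ≤ deg E v := by
  intro v
  obtain ⟨e0, he0⟩ := hEne
  have he0ne : e0.Nonempty := Finset.card_pos.mp (by rw [hunif e0 he0]; omega)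
  obtain ⟨u, hu⟩ := he0ne
  have hwalk : ∃ e ∈ E, v ∈ e := by
    have h := hconn u v
    induction h with
    | refl => exact ⟨e0, he0, hu⟩
    | @tail b c h1 h2 ih =>
        obtain ⟨e, he, hbe, hce⟩ := h2
        exact ⟨e, he, hce⟩
  obtain ⟨e, he, hve⟩ := hwalk
  apply Finset.card_pos.mpr
  exact ⟨e, Finset.mem_filter.mpr ⟨he, hve⟩⟩

lemma regular_of_pairs {n k : ℕ} (hn : 0 < n) (hk : 3 ≤ k) (E : Finset (Finset (Fin n)))
    (hunif : ∀ e ∈ E, e.card = k) (hconn : HConnected E) (c : ℝ)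
    (hpairs : ∀ e ∈ E, ∀ i ∈ e, ∀ j ∈ e, i ≠ j → (deg E i : ℝ) + (deg E j : ℝ) = c) :
    ∃ d : ℕ, ∀ i : Fin n, deg E i = d := by
  classical
  have hedge : ∀ e ∈ E, ∀ i ∈ e, ∀ j ∈ e, deg E i = deg E j := by
    intro e he i hie j hje
    rcases eq_or_ne i j with rfl | hij
    · rfl
    · have hjei : j ∈ e.erase i := Finset.mem_erase.mpr ⟨Ne.symm hij, hje⟩
      have hcard : 1 ≤ ((e.erase i).erase j).card := by
        rw [Finset.card_erase_of_mem hjei, Finset.card_erase_of_mem hie, hunif e he]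
        omega
      obtain ⟨w, hw⟩ := Finset.card_pos.mp hcard
      rcases Finset.mem_erase.mp hw with ⟨hwj, hw2⟩
      rcases Finset.mem_erase.mp hw2 with ⟨hwi, hwe⟩
      have h1 := hpairs e he i hie w hwe (Ne.symm hwi)
      have h2 := hpairs e he j hje w hwe (Ne.symm hwj)
      have : (deg E i : ℝ) = (deg E j : ℝ) := by linarith
      exact_mod_cast this
  have hwalk : ∀ u v : Fin n, deg E u = deg E v := by
    intro u v
    have h := hconn u v
    induction h with
    | refl => rfl
    | @tail b cc h1 h2 ih =>
        obtain ⟨e, he, hbe, hce⟩ := h2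
        rw [ih, hedge e he b hbe cc hce]
  exact ⟨deg E ⟨0, hn⟩, fun i => hwalk i ⟨0, hn⟩⟩

theorem stmt17 {n k : ℕ} (hn : 0 < n) (hk : 3 ≤ k)
    (E : Finset (Finset (Fin n))) (hunif : ∀ e ∈ E, e.card = k)
    (hconn : HConnected E)
    (P : Set ℝ)
    (hP : P = {r : ℝ | ∃ e ∈ E, ∃ i ∈ e, ∃ j ∈ e, i ≠ j ∧
      r = (deg E i : ℝ) + (deg E j : ℝ)}) :
    sInf P ≤ specRad (signlessT E k) ∧ specRad (signlessT E k) ≤ sSup P ∧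
      ((specRad (signlessT E k) = sInf P ∨ specRad (signlessT E k) = sSup P) ↔
        ∃ d : ℕ, ∀ i : Fin n, deg E i = d) := by
  classical
  rcases E.eq_empty_or_nonempty with rfl | hEne
  · -- degenerate case : no edges
    have hP0 : P = ∅ := by
      rw [hP]
      ext r
      simp
    have hQ0 : ∀ (i : Fin n) (t : Fin (k-1) → Fin n), signlessT (∅ : Finset (Finset (Fin n))) k i t = 0 := by
      intro i t
      unfold signlessT adjT deg
      simp
    have hT0 : ∀ (x : Fin n → ℂ) (i : Fin n),
        tApply (signlessT (∅ : Finset (Finset (Fin n))) k) x i = 0 := by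
      intro x i
      unfold tApply
      apply Finset.sum_eq_zero
      intro t _
      rw [hQ0 i t]
      simp
    have hspec : specRad (signlessT (∅ : Finset (Finset (Fin n))) k) = 0 := by
      apply specRad_eq_of _ 0 le_rfl
      · refine ⟨fun _ => 1, ?_, ?_⟩
        · intro h
          have := congr_fun h ⟨0, hn⟩
          simp at this
        · intro i
          rw [hT0]
          simp
      · rintro μ ⟨x, hx0, heig⟩
        obtain ⟨j, hj⟩ : ∃ j, x j ≠ 0 := by
          by_contra h; push_neg at h; exact hx0 (funext h)
        have h1 := heig j
        rw [hT0] at h1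
        have h2 : μ = 0 := by
          rcases mul_eq_zero.mp h1.symm with h | h
          · exact h
          · exact absurd (pow_eq_zero_iff (by omega : k - 1 ≠ 0) |>.mp h) hj
        rw [h2]
        simp
    have hdeg0 : ∀ i : Fin n, deg (∅ : Finset (Finset (Fin n))) i = 0 := by
      intro i; unfold deg; simp
    rw [hP0, hspec, Real.sInf_empty, Real.sSup_empty]
    refine ⟨le_rfl, le_rfl, ?_⟩
    constructor
    · intro _; exact ⟨0, hdeg0⟩
    · intro _; left; rfl
  · -- main case
    have hd1 : ∀ v : Fin n, 1 ≤ deg E v := deg_ge_one hk E hunif hconn hEne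
    -- P is a nonempty finite set
    have hPfin : P.Finite := by
      apply Set.Finite.subset (Set.finite_range
        (fun p : Fin n × Fin n => (deg E p.1 : ℝ) + (deg E p.2 : ℝ)))
      rw [hP]
      rintro r ⟨e, he, i, hie, j, hje, hij, rfl⟩
      exact ⟨(i, j), rfl⟩
    have hPne : P.Nonempty := by
      obtain ⟨e, he⟩ := hEne
      have h1 : 1 < e.card := by rw [hunif e he]; omega
      obtain ⟨i, hie, j, hje, hij⟩ := Finset.one_lt_card.mp h1
      exact ⟨(deg E i : ℝ) + (deg E j : ℝ), by
        rw [hP]; exact ⟨e, he, i, hie, j, hje, hij, rfl⟩⟩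
    have hmemP : ∀ e ∈ E, ∀ i ∈ e, ∀ j ∈ e, i ≠ j →
        ((deg E i : ℝ) + (deg E j : ℝ)) ∈ P := by
      intro e he i hie j hje hij
      rw [hP]
      exact ⟨e, he, i, hie, j, hje, hij, rfl⟩
    have hpairM : ∀ e ∈ E, ∀ i ∈ e, ∀ j ∈ e, i ≠ j →
        (deg E i : ℝ) + (deg E j : ℝ) ≤ sSup P := by
      intro e he i hie j hje hij
      exact le_csSup hPfin.bddAbove (hmemP e he i hie j hje hij)
    have hpairm : ∀ e ∈ E, ∀ i ∈ e, ∀ j ∈ e, i ≠ j →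
        sInf P ≤ (deg E i : ℝ) + (deg E j : ℝ) := by
      intro e he i hie j hje hij
      exact csInf_le hPfin.bddBelow (hmemP e he i hie j hje hij)
    obtain ⟨y, lam, hy, hlam0, hW⟩ := exists_pos_eigenvec hn hk E hunif hconn
    have hyne : y ≠ 0 := by
      intro h
      have := congr_fun h ⟨0, hn⟩
      have h2 := hy ⟨0, hn⟩
      rw [this] at h2
      exact lt_irrefl 0 h2
    have hspec : specRad (signlessT E k) = lam := by
      apply specRad_eq_of _ lam hlam0
      · exact isEig_of_Wr hk E hunif y hyne lam hW
      · intro μ hμ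
        exact abs_le_of_Wr hk E hunif y hy lam (fun i => le_of_eq (hW i)) μ hμ
    have hupper := upper_main hn hk E hunif hconn y lam hy hW (sSup P) hd1 hpairM
    have hlower := lower_main hn hk E hunif hconn y lam hy hW (sInf P) hd1 hpairm
    rw [hspec]
    refine ⟨hlower.1, hupper.1, ?_⟩
    constructor
    · rintro (h | h)
      · exact regular_of_pairs hn hk E hunif hconn (sInf P) (hlower.2 h)
      · exact regular_of_pairs hn hk E hunif hconn (sSup P) (hupper.2 h)
    · rintro ⟨d, hd⟩
      have hPsing : P = {((d : ℝ) + (d : ℝ))} := by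
        apply Set.Subset.antisymm
        · rw [hP]
          rintro r ⟨e, he, i, hie, j, hje, hij, rfl⟩
          rw [hd i, hd j]
          rfl
        · rintro r hr
          rw [Set.mem_singleton_iff] at hr
          obtain ⟨e, he⟩ := hEne
          have h1 : 1 < e.card := by rw [hunif e he]; omega
          obtain ⟨i, hie, j, hje, hij⟩ := Finset.one_lt_card.mp h1
          have := hmemP e he i hie j hje hij
          rw [hd i, hd j] at this
          rw [hr]
          exact this
      have hinf : sInf P = (d : ℝ) + (d : ℝ) := by rw [hPsing, csInf_singleton]
      have hsup : sSup P = (d : ℝ) + (d : ℝ) := by rw [hPsing, csSup_singleton]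
      left
      have h1 := hlower.1
      have h2 := hupper.1
      rw [hinf] at h1 ⊢
      rw [hsup] at h2
      linarith
end
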